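/- arXiv:2604.12296 — 4 statements merged into one kernel-verified Lean document; each statement's English description precedes it below -/
import Mathlib

section
/- Assume the standard scarred-sequence setting. Then for any choice of real numbers λ_{N,(i,i')} with 0 ≤ λ_{N,(i,i')} ≤ Λ (Λ ≥ 0 a constant independent of N, i, i'), the sum over ordered pairs (i, i') with i ≠ i' and X_{N,i} ∩ X_{N,i'} = ∅ of λ_{N,(i,i')} · ⟨A_N, P_{N,i} P_{N,i'} A_N⟩ converges to 0 as N → ∞. -/
open Filter
open scoped BigOperators

noncomputable section

/-- The `M`-qudit space: complex functions on configurations `Fin M → Fin d`,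
with the standard (Euclidean) inner product. -/
abbrev QuditSpace (d M : ℕ) : Type := EuclideanSpace ℂ (Fin M → Fin d)

/-- The computational basis vector indexed by the configuration `s`. -/
def basisVec {d M : ℕ} (s : Fin M → Fin d) : QuditSpace d M :=
  EuclideanSpace.single s 1

/-- The matrix element `⟨e_s, T e_t⟩` of an operator `T` on the qudit space. -/
def matElem {d M : ℕ} (T : QuditSpace d M →L[ℂ] QuditSpace d M)
    (s t : Fin M → Fin d) : ℂ :=
  inner ℂ (basisVec s) (T (basisVec t))

/-- `T` is supported on the set of sites `X`: its matrix elements vanish whenever the two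
configurations differ at a site outside `X`, and (among configuration pairs agreeing
outside `X`) they depend only on the restrictions of the configurations to `X`. -/
def SupportedOn {d M : ℕ} (X : Finset (Fin M))
    (T : QuditSpace d M →L[ℂ] QuditSpace d M) : Prop :=
  (∀ s t : Fin M → Fin d, (∃ j ∉ X, s j ≠ t j) → matElem T s t = 0) ∧
  (∀ s t s' t' : Fin M → Fin d,
      (∀ j ∈ X, s j = s' j) → (∀ j ∈ X, t j = t' j) →
      (∀ j ∉ X, s j = t j) → (∀ j ∉ X, s' j = t' j) →
      matElem T s t = matElem T s' t')

/-- An orthogonal projection: a self-adjoint idempotent operator. -/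
def IsOrthProj {d M : ℕ} (P : QuditSpace d M →L[ℂ] QuditSpace d M) : Prop :=
  (∀ v w : QuditSpace d M, (inner ℂ (P v) w : ℂ) = inner ℂ v (P w)) ∧ P ∘L P = P


lemma matElem_eq_apply {d M : ℕ} (T : QuditSpace d M →L[ℂ] QuditSpace d M)
    (s t : Fin M → Fin d) : matElem T s t = T (basisVec t) s := by
  simp [matElem, basisVec, EuclideanSpace.inner_single_left]

lemma euclid_decomp {d M : ℕ} (x : QuditSpace d M) :
    x = ∑ u : Fin M → Fin d, x u • basisVec u := by
  ext s
  rw [WithLp.ofLp_sum, Finset.sum_apply]  -- might fail on PiLp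
  simp [basisVec, EuclideanSpace.single_apply]

lemma map_decomp {d M : ℕ} (T : QuditSpace d M →L[ℂ] QuditSpace d M) (x : QuditSpace d M) :
    T x = ∑ u : Fin M → Fin d, x u • T (basisVec u) := by
  conv_lhs => rw [euclid_decomp x]
  rw [map_sum]
  simp

lemma matElem_comp {d M : ℕ} (T U : QuditSpace d M →L[ℂ] QuditSpace d M)
    (s t : Fin M → Fin d) :
    matElem (T ∘L U) s t = ∑ u : Fin M → Fin d, matElem T s u * matElem U u t := by
  rw [matElem_eq_apply, ContinuousLinearMap.comp_apply, map_decomp T (U (basisVec t))]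
  rw [WithLp.ofLp_sum, Finset.sum_apply]
  congr 1
  funext u
  rw [matElem_eq_apply, matElem_eq_apply]
  simp [mul_comm]

lemma ext_of_matElem {d M : ℕ} {T U : QuditSpace d M →L[ℂ] QuditSpace d M}
    (h : ∀ s t, matElem T s t = matElem U s t) : T = U := by
  refine ContinuousLinearMap.ext fun x => ?_
  rw [map_decomp T x, map_decomp U x]
  congr 1
  funext u
  congr 1
  ext s
  have := h s u
  rwa [matElem_eq_apply, matElem_eq_apply] at this


lemma commute_of_disjoint {d M : ℕ} {X Y : Finset (Fin M)}
    {P Q : QuditSpace d M →L[ℂ] QuditSpace d M}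
    (hP : SupportedOn X P) (hQ : SupportedOn Y Q) (hXY : X ∩ Y = ∅) :
    P ∘L Q = Q ∘L P := by
  classical
  have hdisj : ∀ j : Fin M, j ∈ X → j ∉ Y := by
    intro j hjX hjY
    have : j ∈ X ∩ Y := Finset.mem_inter.2 ⟨hjX, hjY⟩
    simp [hXY] at this
  refine ext_of_matElem fun s t => ?_
  rw [matElem_comp, matElem_comp]
  by_cases hst : ∀ j, j ∉ X → j ∉ Y → s j = t j
  · -- unique surviving term on each side
    set u₀ : Fin M → Fin d := fun j => if j ∈ X then t j else s j with hu₀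
    set v₀ : Fin M → Fin d := fun j => if j ∈ Y then t j else s j with hv₀
    have hL : ∑ u : Fin M → Fin d, matElem P s u * matElem Q u t
        = matElem P s u₀ * matElem Q u₀ t := by
      refine Finset.sum_eq_single u₀ (fun u _ hu => ?_) (by simp)
      have : ∃ j, u j ≠ u₀ j := by
        by_contra hc
        push_neg at hc
        exact hu (funext hc)
      obtain ⟨j, hj⟩ := this
      by_cases hjX : j ∈ X
      · have h1 : u j ≠ t j := by simpa [hu₀, hjX] using hj
        have : matElem Q u t = 0 := hQ.1 u t ⟨j, hdisj j hjX, h1⟩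
        simp [this]
      · have h1 : s j ≠ u j := by
          intro hc; apply hj; simp [hu₀, hjX, ← hc]
        have : matElem P s u = 0 := hP.1 s u ⟨j, hjX, h1⟩
        simp [this]
    have hR : ∑ u : Fin M → Fin d, matElem Q s u * matElem P u t
        = matElem Q s v₀ * matElem P v₀ t := by
      refine Finset.sum_eq_single v₀ (fun u _ hu => ?_) (by simp)
      have : ∃ j, u j ≠ v₀ j := by
        by_contra hc
        push_neg at hc
        exact hu (funext hc)
      obtain ⟨j, hj⟩ := this
      by_cases hjY : j ∈ Y
      · have h1 : u j ≠ t j := by simpa [hv₀, hjY] using hj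
        have hjX : j ∉ X := fun h => hdisj j h hjY
        have : matElem P u t = 0 := hP.1 u t ⟨j, hjX, h1⟩
        simp [this]
      · have h1 : s j ≠ u j := by
          intro hc; apply hj; simp [hv₀, hjY, ← hc]
        have : matElem Q s u = 0 := hQ.1 s u ⟨j, hjY, h1⟩
        simp [this]
    rw [hL, hR]
    have hPeq : matElem P s u₀ = matElem P v₀ t := by
      refine hP.2 s u₀ v₀ t ?_ ?_ ?_ ?_
      · intro j hjX; simp [hv₀, hdisj j hjX]
      · intro j hjX; simp [hu₀, hjX]
      · intro j hjX; simp [hu₀, hjX]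
      · intro j hjX
        by_cases hjY : j ∈ Y
        · simp [hv₀, hjY]
        · simp [hv₀, hjY, hst j hjX hjY]
    have hQeq : matElem Q u₀ t = matElem Q s v₀ := by
      refine (hQ.2 s v₀ u₀ t ?_ ?_ ?_ ?_).symm
      · intro j hjY
        have hx : j ∉ X := fun h => hdisj j h hjY
        simp [hu₀, hx]
      · intro j hjY; simp [hv₀, hjY]
      · intro j hjY; simp [hv₀, hjY]
      · intro j hjY
        by_cases hjX : j ∈ X
        · simp [hu₀, hjX]
        · simp [hu₀, hjX, hst j hjX hjY]
    rw [hPeq, hQeq, mul_comm]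
  · -- some outside site differs: everything vanishes
    push_neg at hst
    obtain ⟨j, hjX, hjY, hj⟩ := hst
    have hz : ∀ u : Fin M → Fin d, matElem P s u * matElem Q u t = 0 := by
      intro u
      by_cases h : s j = u j
      · have : matElem Q u t = 0 := hQ.1 u t ⟨j, hjY, by rw [← h]; exact hj⟩
        simp [this]
      · have : matElem P s u = 0 := hP.1 s u ⟨j, hjX, h⟩
        simp [this]
    have hz' : ∀ u : Fin M → Fin d, matElem Q s u * matElem P u t = 0 := by
      intro u
      by_cases h : s j = u j
      · have : matElem P u t = 0 := hP.1 u t ⟨j, hjX, by rw [← h]; exact hj⟩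
        simp [this]
      · have : matElem Q s u = 0 := hQ.1 s u ⟨j, hjY, h⟩
        simp [this]
    simp [hz, hz']


lemma inner_PQ {d M : ℕ} {P Q : QuditSpace d M →L[ℂ] QuditSpace d M}
    (hP : IsOrthProj P) (hQ : IsOrthProj Q) (hcomm : P ∘L Q = Q ∘L P)
    (A : QuditSpace d M) :
    (inner ℂ A (P (Q A)) : ℂ) = ((‖P (Q A)‖ : ℝ) : ℂ) ^ 2 := by
  have hQP : Q (P A) = P (Q A) := by
    have := congrArg (fun T : QuditSpace d M →L[ℂ] QuditSpace d M => T A) hcomm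
    simpa using this.symm
  have h1 : Q (P (Q A)) = P (Q (Q A)) := by
    have := congrArg (fun T : QuditSpace d M →L[ℂ] QuditSpace d M => T (Q A)) hcomm
    simpa using this.symm
  have hQQ : Q (Q A) = Q A := by
    have := congrArg (fun T : QuditSpace d M →L[ℂ] QuditSpace d M => T A) hQ.2
    simpa using this
  have hPP : P (P (Q A)) = P (Q A) := by
    have := congrArg (fun T : QuditSpace d M →L[ℂ] QuditSpace d M => T (Q A)) hP.2
    simpa using this
  have hfix : P (Q (P (Q A))) = P (Q A) := by rw [h1, hQQ, hPP]
  calc (inner ℂ A (P (Q A)) : ℂ)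
      = inner ℂ A (P (Q (P (Q A)))) := by rw [hfix]
    _ = inner ℂ (P A) (Q (P (Q A))) := (hP.1 A _).symm
    _ = inner ℂ (Q (P A)) (P (Q A)) := (hQ.1 _ _).symm
    _ = inner ℂ (P (Q A)) (P (Q A)) := by rw [hQP]
    _ = ((‖P (Q A)‖ : ℝ) : ℂ) ^ 2 := inner_self_eq_norm_sq_to_K _

section Estimate

variable {d m : ℕ} {ι : Type} [Fintype ι] [DecidableEq ι]

lemma card_bad_le (Cb : ℕ) (X : ι → Finset (Fin m))
    (hC : ∀ i : ι,
      (Finset.univ.filter fun i' : ι => i' ≠ i ∧ (X i ∩ X i').Nonempty).card ≤ Cb)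
    (i : ι) :
    (Finset.univ.filter fun i' : ι => ¬((i : ι) ≠ i' ∧ X i ∩ X i' = ∅)).card ≤ 1 + Cb := by
  classical
  have hsub : (Finset.univ.filter fun i' : ι => ¬((i : ι) ≠ i' ∧ X i ∩ X i' = ∅))
      ⊆ insert i (Finset.univ.filter fun i' : ι => i' ≠ i ∧ (X i ∩ X i').Nonempty) := by
    intro i' hi'
    simp only [Finset.mem_filter, Finset.mem_univ, true_and] at hi'
    push_neg at hi'
    by_cases h : i' = i
    · simp [h]
    · refine Finset.mem_insert_of_mem ?_
      simp only [Finset.mem_filter, Finset.mem_univ, true_and]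
      exact ⟨h, hi' (fun hc => h hc.symm)⟩
  calc _ ≤ (insert i (Finset.univ.filter fun i' : ι =>
        i' ≠ i ∧ (X i ∩ X i').Nonempty)).card := Finset.card_le_card hsub
    _ ≤ 1 + Cb := le_trans (Finset.card_insert_le _ _) (by
        have := hC i; omega)

lemma card_bad_le' (Cb : ℕ) (X : ι → Finset (Fin m))
    (hC : ∀ i : ι,
      (Finset.univ.filter fun i' : ι => i' ≠ i ∧ (X i ∩ X i').Nonempty).card ≤ Cb)
    (i' : ι) :
    (Finset.univ.filter fun i : ι => ¬((i : ι) ≠ i' ∧ X i ∩ X i' = ∅)).card ≤ 1 + Cb := by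
  classical
  have hsub : (Finset.univ.filter fun i : ι => ¬((i : ι) ≠ i' ∧ X i ∩ X i' = ∅))
      ⊆ insert i' (Finset.univ.filter fun i : ι => i ≠ i' ∧ (X i' ∩ X i).Nonempty) := by
    intro i hi
    simp only [Finset.mem_filter, Finset.mem_univ, true_and] at hi
    push_neg at hi
    by_cases h : i = i'
    · simp [h]
    · refine Finset.mem_insert_of_mem ?_
      simp only [Finset.mem_filter, Finset.mem_univ, true_and]
      refine ⟨h, ?_⟩
      rw [Finset.inter_comm]
      exact hi h
  calc _ ≤ _ := Finset.card_le_card hsub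
    _ ≤ 1 + Cb := le_trans (Finset.card_insert_le _ _) (by
        have := hC i'; omega)


lemma sum_a_le (Cb : ℕ) (X : ι → Finset (Fin m)) (a : ι → ℝ) (ha : ∀ i, 0 ≤ a i)
    (hC : ∀ i : ι,
      (Finset.univ.filter fun i' : ι => i' ≠ i ∧ (X i ∩ X i').Nonempty).card ≤ Cb) :
    ∑ p ∈ Finset.univ.filter
        (fun p : ι × ι => ¬(p.1 ≠ p.2 ∧ X p.1 ∩ X p.2 = ∅)), a p.1
      ≤ (1 + (Cb : ℝ)) * ∑ i, a i := by
  classical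
  rw [Finset.sum_filter, Fintype.sum_prod_type]
  rw [Finset.mul_sum]
  refine Finset.sum_le_sum fun i _ => ?_
  have : ∑ i' : ι, (if ¬((i : ι) ≠ i' ∧ X i ∩ X i' = ∅) then a i else 0)
      = (Finset.univ.filter fun i' : ι => ¬((i : ι) ≠ i' ∧ X i ∩ X i' = ∅)).card • a i := by
    rw [← Finset.sum_filter, Finset.sum_const]
  rw [this, nsmul_eq_mul]
  have hcard := card_bad_le Cb X hC i
  have : ((Finset.univ.filter fun i' : ι => ¬((i : ι) ≠ i' ∧ X i ∩ X i' = ∅)).card : ℝ)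
      ≤ 1 + (Cb : ℝ) := by exact_mod_cast hcard
  exact mul_le_mul_of_nonneg_right this (ha i) |>.trans_eq rfl

lemma sum_a_le' (Cb : ℕ) (X : ι → Finset (Fin m)) (a : ι → ℝ) (ha : ∀ i, 0 ≤ a i)
    (hC : ∀ i : ι,
      (Finset.univ.filter fun i' : ι => i' ≠ i ∧ (X i ∩ X i').Nonempty).card ≤ Cb) :
    ∑ p ∈ Finset.univ.filter
        (fun p : ι × ι => ¬(p.1 ≠ p.2 ∧ X p.1 ∩ X p.2 = ∅)), a p.2
      ≤ (1 + (Cb : ℝ)) * ∑ i, a i := by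
  classical
  rw [Finset.sum_filter, Fintype.sum_prod_type_right]
  rw [Finset.mul_sum]
  refine Finset.sum_le_sum fun i' _ => ?_
  have : ∑ i : ι, (if ¬((i : ι) ≠ i' ∧ X i ∩ X i' = ∅) then a i' else 0)
      = (Finset.univ.filter fun i : ι => ¬((i : ι) ≠ i' ∧ X i ∩ X i' = ∅)).card • a i' := by
    rw [← Finset.sum_filter, Finset.sum_const]
  rw [this, nsmul_eq_mul]
  have hcard := card_bad_le' Cb X hC i'
  have : ((Finset.univ.filter fun i : ι => ¬((i : ι) ≠ i' ∧ X i ∩ X i' = ∅)).card : ℝ)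
      ≤ 1 + (Cb : ℝ) := by exact_mod_cast hcard
  exact mul_le_mul_of_nonneg_right this (ha i')

lemma main_estimate (Cb : ℕ) (X : ι → Finset (Fin m))
    (P : ι → (QuditSpace d m →L[ℂ] QuditSpace d m))
    (A : QuditSpace d m)
    (hC : ∀ i : ι,
      (Finset.univ.filter fun i' : ι => i' ≠ i ∧ (X i ∩ X i').Nonempty).card ≤ Cb)
    (hproj : ∀ i, IsOrthProj (P i))
    (hsupp : ∀ i, SupportedOn (X i) (P i))
    (hA : ‖A‖ = 1)
    (Lam : ℝ) (hLam : 0 ≤ Lam) (lam : ι × ι → ℝ)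
    (hlam : ∀ p, 0 ≤ lam p ∧ lam p ≤ Lam) :
    ∑ p ∈ Finset.univ.filter
        (fun p : ι × ι => p.1 ≠ p.2 ∧ X p.1 ∩ X p.2 = ∅),
      lam p * ‖P p.1 (P p.2 A)‖ ^ 2
      ≤ Lam * (‖(∑ i, P i) A‖ ^ 2 + (1 + (Cb : ℝ)) * ‖(∑ i, P i) A‖) := by
  classical
  set G : QuditSpace d m := (∑ i, P i) A with hG
  set r : ι × ι → ℝ := fun p => (inner ℂ (P p.1 A) (P p.2 A) : ℂ).re with hr
  set a : ι → ℝ := fun i => ‖P i A‖ ^ 2 with ha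
  have ha0 : ∀ i, 0 ≤ a i := fun i => sq_nonneg _
  set S := Finset.univ.filter (fun p : ι × ι => p.1 ≠ p.2 ∧ X p.1 ∩ X p.2 = ∅) with hS
  -- on disjoint pairs, the cross term is the squared norm
  have hrS : ∀ p ∈ S, ‖P p.1 (P p.2 A)‖ ^ 2 = r p := by
    intro p hp
    simp only [hS, Finset.mem_filter, Finset.mem_univ, true_and] at hp
    have hcomm : P p.1 ∘L P p.2 = P p.2 ∘L P p.1 :=
      commute_of_disjoint (hsupp p.1) (hsupp p.2) hp.2
    have h1 : (inner ℂ A (P p.1 (P p.2 A)) : ℂ) = ((‖P p.1 (P p.2 A)‖ : ℝ) : ℂ) ^ 2 :=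
      inner_PQ (hproj p.1) (hproj p.2) hcomm A
    have h2 : (inner ℂ (P p.1 A) (P p.2 A) : ℂ) = inner ℂ A (P p.1 (P p.2 A)) :=
      (hproj p.1).1 A (P p.2 A)
    have := congrArg Complex.re (h2.trans h1)
    simp only [← Complex.ofReal_pow, Complex.ofReal_re] at this
    exact (this).symm
  -- step: weighted sum ≤ Lam * plain sum
  have step1 : ∑ p ∈ S, lam p * ‖P p.1 (P p.2 A)‖ ^ 2 ≤ Lam * ∑ p ∈ S, r p := by
    rw [Finset.mul_sum]
    refine Finset.sum_le_sum fun p hp => ?_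
    rw [hrS p hp] at *
    have h0 : 0 ≤ r p := by rw [← hrS p hp]; exact sq_nonneg _
    exact mul_le_mul_of_nonneg_right (hlam p).2 h0
  -- total sum over all pairs equals ‖G‖²
  have htotal : ∑ p : ι × ι, r p = ‖G‖ ^ 2 := by
    have : ∑ p : ι × ι, (inner ℂ (P p.1 A) (P p.2 A) : ℂ) = inner ℂ G G := by
      rw [Fintype.sum_prod_type]
      have hGsum : G = ∑ i, P i A := by
        rw [hG, ContinuousLinearMap.sum_apply]
      rw [hGsum, sum_inner]
      congr 1
      funext i
      rw [inner_sum]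
    have := congrArg Complex.re this
    rw [Complex.re_sum] at this
    rw [hr]
    rw [this]
    simpa using inner_self_eq_norm_sq (𝕜 := ℂ) G
  -- diagonal/intersecting bound
  have hcompl : |∑ p ∈ Finset.univ.filter
      (fun p : ι × ι => ¬(p.1 ≠ p.2 ∧ X p.1 ∩ X p.2 = ∅)), r p|
      ≤ (1 + (Cb : ℝ)) * ∑ i, a i := by
    calc |∑ p ∈ _, r p| ≤ ∑ p ∈ Finset.univ.filter
          (fun p : ι × ι => ¬(p.1 ≠ p.2 ∧ X p.1 ∩ X p.2 = ∅)), |r p| :=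
        Finset.abs_sum_le_sum_abs _ _
      _ ≤ ∑ p ∈ Finset.univ.filter
          (fun p : ι × ι => ¬(p.1 ≠ p.2 ∧ X p.1 ∩ X p.2 = ∅)), (a p.1 + a p.2) / 2 := by
        refine Finset.sum_le_sum fun p _ => ?_
        have h1 : |r p| ≤ ‖(inner ℂ (P p.1 A) (P p.2 A) : ℂ)‖ := by
          exact Complex.abs_re_le_norm _
        have h2 : ‖(inner ℂ (P p.1 A) (P p.2 A) : ℂ)‖ ≤ ‖P p.1 A‖ * ‖P p.2 A‖ :=
          norm_inner_le_norm _ _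
        have h3 : ‖P p.1 A‖ * ‖P p.2 A‖ ≤ (a p.1 + a p.2) / 2 := by
          have := sq_nonneg (‖P p.1 A‖ - ‖P p.2 A‖)
          simp only [ha]
          nlinarith
        linarith
      _ ≤ (1 + (Cb : ℝ)) * ∑ i, a i := by
        have e1 := sum_a_le (m := m) Cb X a ha0 hC
        have e2 := sum_a_le' (m := m) Cb X a ha0 hC
        have hsum : ∑ p ∈ Finset.univ.filter
            (fun p : ι × ι => ¬(p.1 ≠ p.2 ∧ X p.1 ∩ X p.2 = ∅)), (a p.1 + a p.2) / 2
            = ((∑ p ∈ Finset.univ.filter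
              (fun p : ι × ι => ¬(p.1 ≠ p.2 ∧ X p.1 ∩ X p.2 = ∅)), a p.1)
            + ∑ p ∈ Finset.univ.filter
              (fun p : ι × ι => ¬(p.1 ≠ p.2 ∧ X p.1 ∩ X p.2 = ∅)), a p.2) / 2 := by
          rw [← Finset.sum_div, ← Finset.sum_add_distrib]
        rw [hsum]
        linarith
  -- sum of a i ≤ ‖G‖
  have hsuma : ∑ i, a i ≤ ‖G‖ := by
    have hai : ∀ i, a i = (inner ℂ A (P i A) : ℂ).re := by
      intro i
      have h2 : (inner ℂ (P i A) (P i A) : ℂ) = inner ℂ A (P i (P i A)) := (hproj i).1 A (P i A)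
      have hPP : P i (P i A) = P i A := by
        have := congrArg (fun T : QuditSpace d m →L[ℂ] QuditSpace d m => T A) (hproj i).2
        simpa using this
      rw [hPP] at h2
      have h3 := congrArg Complex.re h2
      have h4 : (inner ℂ (P i A) (P i A) : ℂ).re = ‖P i A‖ ^ 2 := by
        simpa using inner_self_eq_norm_sq (𝕜 := ℂ) (P i A)
      rw [h4] at h3
      simp only [ha]
      exact h3
    have : ∑ i, a i = (inner ℂ A G : ℂ).re := by
      rw [Finset.sum_congr rfl fun i _ => hai i]
      have hGsum : G = ∑ i, P i A := by rw [hG, ContinuousLinearMap.sum_apply]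
      rw [hGsum, inner_sum, Complex.re_sum]
    rw [this]
    calc (inner ℂ A G : ℂ).re ≤ ‖(inner ℂ A G : ℂ)‖ := by
          exact Complex.re_le_norm _
      _ ≤ ‖A‖ * ‖G‖ := norm_inner_le_norm _ _
      _ = ‖G‖ := by rw [hA, one_mul]
  -- combine
  have hsplit : ∑ p ∈ S, r p + ∑ p ∈ Finset.univ.filter
      (fun p : ι × ι => ¬(p.1 ≠ p.2 ∧ X p.1 ∩ X p.2 = ∅)), r p = ∑ p : ι × ι, r p := by
    rw [hS]
    exact Finset.sum_filter_add_sum_filter_not _ _ _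
  have hSr : ∑ p ∈ S, r p ≤ ‖G‖ ^ 2 + (1 + (Cb : ℝ)) * ‖G‖ := by
    have h1 : ∑ p ∈ S, r p = ‖G‖ ^ 2 - ∑ p ∈ Finset.univ.filter
        (fun p : ι × ι => ¬(p.1 ≠ p.2 ∧ X p.1 ∩ X p.2 = ∅)), r p := by
      rw [← htotal, ← hsplit]; ring
    have h2 := (abs_le.1 hcompl).1
    have h3 : (1 + (Cb : ℝ)) * ∑ i, a i ≤ (1 + (Cb : ℝ)) * ‖G‖ :=
      mul_le_mul_of_nonneg_left hsuma (by positivity)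
    rw [h1]
    linarith
  calc ∑ p ∈ S, lam p * ‖P p.1 (P p.2 A)‖ ^ 2 ≤ Lam * ∑ p ∈ S, r p := step1
    _ ≤ Lam * (‖G‖ ^ 2 + (1 + (Cb : ℝ)) * ‖G‖) := mul_le_mul_of_nonneg_left hSr hLam

end Estimate

/-- **Part 2 of Lemma 1 of the paper** (standard scarred-sequence setting): the weighted sum of
cross-expectations `⟨A_N, P_{N,i} P_{N,i'} A_N⟩` over ordered pairs of distinct indices with
disjoint supports tends to `0`. -/
theorem disjoint_pair_expectation_tendsto_zero
    (d K C : ℕ) (hd : 2 ≤ d)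
    (M : ℕ → ℕ) (I : ℕ → Type) [∀ N, Fintype (I N)] [∀ N, DecidableEq (I N)]
    (X : ∀ N, I N → Finset (Fin (M N)))
    (P : ∀ N, (i : I N) → QuditSpace d (M N) →L[ℂ] QuditSpace d (M N))
    (A : ∀ N, QuditSpace d (M N))
    (hK : ∀ N (i : I N), (X N i).card ≤ K)
    (hC : ∀ N (i : I N),
      (Finset.univ.filter fun i' : I N => i' ≠ i ∧ (X N i ∩ X N i').Nonempty).card ≤ C)
    (hproj : ∀ N (i : I N), IsOrthProj (P N i))
    (hsupp : ∀ N (i : I N), SupportedOn (X N i) (P N i))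
    (hA : ∀ N, ‖A N‖ = 1)
    (hlim : Tendsto (fun N => ‖(∑ i : I N, P N i) (A N)‖) atTop (nhds 0))
    (Lam : ℝ) (hLam : 0 ≤ Lam)
    (lam : ∀ N, I N × I N → ℝ)
    (hlam : ∀ N (p : I N × I N), 0 ≤ lam N p ∧ lam N p ≤ Lam) :
    Tendsto
      (fun N => ∑ p ∈ Finset.univ.filter
          (fun p : I N × I N => p.1 ≠ p.2 ∧ X N p.1 ∩ X N p.2 = ∅),
        (lam N p : ℂ) * (inner ℂ (A N) ((P N p.1) ((P N p.2) (A N))) : ℂ))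
      atTop (nhds 0) := by
  classical
  set realSum : ℕ → ℝ := fun N => ∑ p ∈ Finset.univ.filter
      (fun p : I N × I N => p.1 ≠ p.2 ∧ X N p.1 ∩ X N p.2 = ∅),
    lam N p * ‖(P N p.1) ((P N p.2) (A N))‖ ^ 2 with hrealSum
  have key : (fun N => ∑ p ∈ Finset.univ.filter
      (fun p : I N × I N => p.1 ≠ p.2 ∧ X N p.1 ∩ X N p.2 = ∅),
      (lam N p : ℂ) * (inner ℂ (A N) ((P N p.1) ((P N p.2) (A N))) : ℂ))
      = fun N => ((realSum N : ℝ) : ℂ) := by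
    funext N
    rw [hrealSum]
    push_cast
    refine Finset.sum_congr rfl fun p hp => ?_
    simp only [Finset.mem_filter, Finset.mem_univ, true_and] at hp
    have hcomm : P N p.1 ∘L P N p.2 = P N p.2 ∘L P N p.1 :=
      commute_of_disjoint (hsupp N p.1) (hsupp N p.2) hp.2
    rw [inner_PQ (hproj N p.1) (hproj N p.2) hcomm (A N)]
    try push_cast
    try ring
  rw [key]
  have hg : Tendsto (fun N => Lam * (‖(∑ i : I N, P N i) (A N)‖ ^ 2
      + (1 + (C : ℝ)) * ‖(∑ i : I N, P N i) (A N)‖)) atTop (nhds 0) := by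
    have hc : Continuous (fun x : ℝ => Lam * (x ^ 2 + (1 + (C : ℝ)) * x)) :=
      continuous_const.mul ((continuous_pow 2).add (continuous_const.mul continuous_id))
    have := (hc.tendsto 0).comp hlim
    simpa [Function.comp_def] using this
  have hreal : Tendsto realSum atTop (nhds 0) := by
    refine squeeze_zero (fun N => ?_) (fun N => ?_) hg
    · refine Finset.sum_nonneg fun p _ => ?_
      exact mul_nonneg (hlam N p).1 (sq_nonneg _)
    · exact main_estimate C (X N) (P N) (A N) (hC N) (hproj N) (hsupp N) (hA N)
        Lam hLam (lam N) (hlam N)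
  have := (Complex.continuous_ofReal.tendsto 0).comp hreal
  simpa [Function.comp_def] using this
end
end

section
/- Assume the standard scarred-sequence setting, fix a linear order on each index set I_N, and suppose additionally given, for each N and each i ∈ I_N, an orthonormal family of vectors (π_{N,i}^α)_α in the M_N-qudit space such that P_{N,i} = Σ_α Π_{N,i}^α, where Π_{N,i}^α denotes the rank-one orthogonal projection onto π_{N,i}^α, and each Π_{N,i}^α is supported on X_{N,i}. Then the quantity Σ_{i < i', X_{N,i} ∩ X_{N,i'} ≠ ∅} Σ_{α, α'} ⟨A_N, (Π_{N,i}^α + Π_{N,i'}^{α'})² A_N⟩ converges to 0 as N → ∞. -/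
open Filter
open scoped BigOperators

noncomputable section

/-- The rank-one orthogonal projection `|v⟩⟨v|` onto (the span of) a unit vector `v`. -/
def rankOne {d M : ℕ} (v : QuditSpace d M) : QuditSpace d M →L[ℂ] QuditSpace d M :=
  (innerSL ℂ v).smulRight v

lemma rankOne_apply {d M : ℕ} (v w : QuditSpace d M) :
    rankOne v w = (inner ℂ v w : ℂ) • v := by simp [rankOne]

lemma matElem_rankOne {d M : ℕ} (v : QuditSpace d M) (s t : Fin M → Fin d) :
    matElem (rankOne v) s t = (starRingEnd ℂ) (v t) * v s := by
  simp [matElem, rankOne, basisVec, inner_smul_right,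
    EuclideanSpace.inner_single_left, EuclideanSpace.inner_single_right]

lemma vec_eq_zero_of_supported {d M : ℕ} (hd : 2 ≤ d) {X : Finset (Fin M)}
    {v : QuditSpace d M} (hs : SupportedOn X (rankOne v)) {j : Fin M} (hj : j ∉ X) :
    v = 0 := by
  have key : ∀ s : Fin M → Fin d, v s = 0 := by
    intro s
    obtain ⟨k, hk⟩ : ∃ k : Fin d, k ≠ s j :=
      Fintype.exists_ne_of_one_lt_card (by simpa using by omega : 1 < Fintype.card (Fin d)) (s j)
    set s' := Function.update s j k with hs'
    have h1 : matElem (rankOne v) s s' = 0 := by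
      refine hs.1 s s' ⟨j, hj, ?_⟩
      simp [hs', Function.update_self]
      exact fun h => hk h.symm
    have h2 : matElem (rankOne v) s s = matElem (rankOne v) s' s' := by
      refine hs.2 s s s' s' ?_ ?_ (fun _ _ => rfl) (fun _ _ => rfl)
      · intro j' hj'
        have hne : j' ≠ j := by rintro rfl; exact hj hj'
        simp [hs', Function.update_apply, hne]
      · intro j' hj'
        have hne : j' ≠ j := by rintro rfl; exact hj hj'
        simp [hs', Function.update_apply, hne]
    simp only [matElem_rankOne] at h1 h2
    have hsq : ((starRingEnd ℂ) (v s) * v s) * ((starRingEnd ℂ) (v s) * v s) = 0 := by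
      calc ((starRingEnd ℂ) (v s) * v s) * ((starRingEnd ℂ) (v s) * v s)
          = ((starRingEnd ℂ) (v s) * v s) * ((starRingEnd ℂ) (v s') * v s') := by rw [← h2]
        _ = ((starRingEnd ℂ) (v s') * v s) * ((starRingEnd ℂ) (v s) * v s') := by ring
        _ = 0 := by rw [h1]; ring
    have h0 : (starRingEnd ℂ) (v s) * v s = 0 := by
      exact mul_self_eq_zero.mp hsq
    rcases mul_eq_zero.mp h0 with h | h
    · rw [starRingEnd_apply] at h; exact star_eq_zero.mp h
    · exact h
  ext s
  simpa using key s

lemma scarRankLe {d M K : ℕ} (hd : 2 ≤ d) {X : Finset (Fin M)} (hX : X.card ≤ K)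
    {r : ℕ} {pi : Fin r → QuditSpace d M} (hpi : Orthonormal ℂ pi)
    (hsupp : ∀ α, SupportedOn X (rankOne (pi α))) : r ≤ d ^ K := by
  by_cases hM : M ≤ K
  · have h1 : r ≤ d ^ M := by
      have h := hpi.linearIndependent.fintype_card_le_finrank
      simpa [finrank_euclideanSpace, Fintype.card_fun] using h
    exact h1.trans (Nat.pow_le_pow_right (by omega) hM)
  · rcases Nat.eq_zero_or_pos r with h | h
    · simp [h]
    · exfalso
      obtain ⟨j, hj⟩ : ∃ j : Fin M, j ∉ X := by
        by_contra h'
        push_neg at h'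
        have : X = Finset.univ := Finset.eq_univ_iff_forall.mpr h'
        rw [this] at hX
        simp [Finset.card_univ] at hX
        omega
      have hz := vec_eq_zero_of_supported hd (hsupp ⟨0, h⟩) hj
      have hn := hpi.1 ⟨0, h⟩
      rw [hz] at hn
      simp at hn

lemma rankOne_inner_left {d M : ℕ} (v x y : QuditSpace d M) :
    (inner ℂ (rankOne v x) y : ℂ) = inner ℂ x (rankOne v y) := by
  rw [rankOne_apply, rankOne_apply, inner_smul_left, inner_smul_right,
    inner_conj_symm]
  ring

lemma inner_rankOne_self {d M : ℕ} (v A : QuditSpace d M) (hv : ‖v‖ = 1) :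
    (inner ℂ A (rankOne v A) : ℂ) = ((‖rankOne v A‖ ^ 2 : ℝ) : ℂ) := by
  rw [rankOne_apply, inner_smul_right, ← inner_conj_symm A v, RCLike.mul_conj]
  rw [norm_smul, hv, mul_one]
  norm_cast

/-- **Part 3 of Lemma 1 of the paper** (standard scarred-sequence setting, with each projector
`P_{N,i} = ∑ α Π_{N,i}^α` decomposed into rank-one projections onto an orthonormal family):
the sum over overlapping pairs `i < i'` of `⟨A_N, (Π_{N,i}^α + Π_{N,i'}^{α'})² A_N⟩`
tends to `0`. -/
theorem overlapping_pair_square_expectation_tendsto_zero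
    (d K C : ℕ) (hd : 2 ≤ d)
    (M : ℕ → ℕ) (I : ℕ → Type) [∀ N, Fintype (I N)] [∀ N, DecidableEq (I N)]
    [∀ N, LinearOrder (I N)]
    (X : ∀ N, I N → Finset (Fin (M N)))
    (P : ∀ N, (i : I N) → QuditSpace d (M N) →L[ℂ] QuditSpace d (M N))
    (A : ∀ N, QuditSpace d (M N))
    (hK : ∀ N (i : I N), (X N i).card ≤ K)
    (hC : ∀ N (i : I N),
      (Finset.univ.filter fun i' : I N => i' ≠ i ∧ (X N i ∩ X N i').Nonempty).card ≤ C)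
    (hproj : ∀ N (i : I N), IsOrthProj (P N i))
    (hsupp : ∀ N (i : I N), SupportedOn (X N i) (P N i))
    (hA : ∀ N, ‖A N‖ = 1)
    (hlim : Tendsto (fun N => ‖(∑ i : I N, P N i) (A N)‖) atTop (nhds 0))
    (r : ∀ N, I N → ℕ)
    (pi : ∀ N (i : I N), Fin (r N i) → QuditSpace d (M N))
    (hpi : ∀ N (i : I N), Orthonormal ℂ (pi N i))
    (hPdec : ∀ N (i : I N), P N i = ∑ α : Fin (r N i), rankOne (pi N i α))
    (hPisupp : ∀ N (i : I N) (α : Fin (r N i)), SupportedOn (X N i) (rankOne (pi N i α))) :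
    Tendsto
      (fun N => ∑ p ∈ Finset.univ.filter
          (fun p : I N × I N => p.1 < p.2 ∧ (X N p.1 ∩ X N p.2).Nonempty),
        ∑ α : Fin (r N p.1), ∑ α' : Fin (r N p.2),
          (inner ℂ (A N)
            (((rankOne (pi N p.1 α) + rankOne (pi N p.2 α')) ∘L
              (rankOne (pi N p.1 α) + rankOne (pi N p.2 α'))) (A N)) : ℂ))
      atTop (nhds 0) := by
  classical
  -- the real-valued version of the sum
  set g : ℕ → ℝ := fun N => ∑ p ∈ Finset.univ.filter
      (fun p : I N × I N => p.1 < p.2 ∧ (X N p.1 ∩ X N p.2).Nonempty),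
    ∑ α : Fin (r N p.1), ∑ α' : Fin (r N p.2),
      ‖(rankOne (pi N p.1 α) + rankOne (pi N p.2 α')) (A N)‖ ^ 2 with hg
  -- local single-site weights
  set a : ∀ N, I N → ℝ := fun N i => ∑ α : Fin (r N i), ‖rankOne (pi N i α) (A N)‖ ^ 2 with ha
  have ha0 : ∀ N (i : I N), 0 ≤ a N i := by
    intro N i; apply Finset.sum_nonneg; intro α _; positivity
  -- rank bound
  have hr : ∀ N (i : I N), r N i ≤ d ^ K :=
    fun N i => scarRankLe hd (hK N i) (hpi N i) (hPisupp N i)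
  -- sum of local weights is controlled by the scar hypothesis
  have hasum : ∀ N, ∑ i : I N, a N i ≤ ‖(∑ i : I N, P N i) (A N)‖ := by
    intro N
    have h1 : ∑ i : I N, a N i
        = (inner ℂ (A N) ((∑ i : I N, P N i) (A N)) : ℂ).re := by
      rw [ContinuousLinearMap.sum_apply, inner_sum, Complex.re_sum]
      refine Finset.sum_congr rfl fun i _ => ?_
      rw [hPdec N i, ContinuousLinearMap.sum_apply, inner_sum, Complex.re_sum]
      refine Finset.sum_congr rfl fun α _ => ?_
      rw [inner_rankOne_self _ _ ((hpi N i).1 α)]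
      exact (Complex.ofReal_re _).symm
    rw [h1]
    calc (inner ℂ (A N) ((∑ i : I N, P N i) (A N)) : ℂ).re
        ≤ ‖(inner ℂ (A N) ((∑ i : I N, P N i) (A N)) : ℂ)‖ := Complex.re_le_norm _
      _ ≤ ‖A N‖ * ‖(∑ i : I N, P N i) (A N)‖ := norm_inner_le_norm _ _
      _ = ‖(∑ i : I N, P N i) (A N)‖ := by rw [hA N, one_mul]
  -- each pair's inner double sum is bounded
  have hpair : ∀ N (p : I N × I N),
      ∑ α : Fin (r N p.1), ∑ α' : Fin (r N p.2),
        ‖(rankOne (pi N p.1 α) + rankOne (pi N p.2 α')) (A N)‖ ^ 2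
      ≤ 2 * (d ^ K : ℝ) * (a N p.1 + a N p.2) := by
    intro N p
    have step1 : ∀ (α : Fin (r N p.1)) (α' : Fin (r N p.2)),
        ‖(rankOne (pi N p.1 α) + rankOne (pi N p.2 α')) (A N)‖ ^ 2
        ≤ 2 * ‖rankOne (pi N p.1 α) (A N)‖ ^ 2 + 2 * ‖rankOne (pi N p.2 α') (A N)‖ ^ 2 := by
      intro α α'
      have tri : ‖(rankOne (pi N p.1 α) + rankOne (pi N p.2 α')) (A N)‖
          ≤ ‖rankOne (pi N p.1 α) (A N)‖ + ‖rankOne (pi N p.2 α') (A N)‖ := by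
        rw [ContinuousLinearMap.add_apply]; exact norm_add_le _ _
      nlinarith [norm_nonneg ((rankOne (pi N p.1 α) + rankOne (pi N p.2 α')) (A N)),
        norm_nonneg (rankOne (pi N p.1 α) (A N)), norm_nonneg (rankOne (pi N p.2 α') (A N)),
        sq_nonneg (‖rankOne (pi N p.1 α) (A N)‖ - ‖rankOne (pi N p.2 α') (A N)‖)]
    calc ∑ α : Fin (r N p.1), ∑ α' : Fin (r N p.2),
          ‖(rankOne (pi N p.1 α) + rankOne (pi N p.2 α')) (A N)‖ ^ 2
        ≤ ∑ α : Fin (r N p.1), ∑ α' : Fin (r N p.2),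
          (2 * ‖rankOne (pi N p.1 α) (A N)‖ ^ 2 + 2 * ‖rankOne (pi N p.2 α') (A N)‖ ^ 2) :=
          Finset.sum_le_sum fun α _ => Finset.sum_le_sum fun α' _ => step1 α α'
      _ = 2 * ((r N p.2 : ℝ) * a N p.1 + (r N p.1 : ℝ) * a N p.2) := by
          simp only [Finset.sum_add_distrib, Finset.sum_const, Finset.card_univ,
            Fintype.card_fin, nsmul_eq_mul, ← Finset.sum_mul, ← Finset.mul_sum]
          ring
      _ ≤ 2 * ((d ^ K : ℝ) * a N p.1 + (d ^ K : ℝ) * a N p.2) := by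
          have b1 : ((r N p.2 : ℝ)) ≤ (d ^ K : ℝ) := by exact_mod_cast hr N p.2
          have b2 : ((r N p.1 : ℝ)) ≤ (d ^ K : ℝ) := by exact_mod_cast hr N p.1
          have := mul_le_mul_of_nonneg_right b1 (ha0 N p.1)
          have := mul_le_mul_of_nonneg_right b2 (ha0 N p.2)
          nlinarith
      _ = 2 * (d ^ K : ℝ) * (a N p.1 + a N p.2) := by ring
  -- pair sums vs single sums
  have hfst : ∀ N, ∑ p ∈ Finset.univ.filter
      (fun p : I N × I N => p.1 < p.2 ∧ (X N p.1 ∩ X N p.2).Nonempty), a N p.1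
      ≤ (C : ℝ) * ∑ i : I N, a N i := by
    intro N
    rw [Finset.sum_filter, ← Finset.univ_product_univ, Finset.sum_product, Finset.mul_sum]
    refine Finset.sum_le_sum fun i _ => ?_
    have : (∑ i' : I N, if i < i' ∧ (X N i ∩ X N i').Nonempty then a N i else 0)
        = ((Finset.univ.filter fun i' : I N => i < i' ∧ (X N i ∩ X N i').Nonempty).card : ℝ)
          * a N i := by
      rw [← Finset.sum_filter, Finset.sum_const, nsmul_eq_mul]
    rw [this]
    have hcard : (Finset.univ.filter fun i' : I N =>
        i < i' ∧ (X N i ∩ X N i').Nonempty).card ≤ C := by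
      refine le_trans (Finset.card_le_card ?_) (hC N i)
      intro i' hi'
      simp only [Finset.mem_filter, Finset.mem_univ, true_and] at hi' ⊢
      exact ⟨hi'.1.ne', hi'.2⟩
    exact mul_le_mul_of_nonneg_right (by exact_mod_cast hcard) (ha0 N i)
  have hsnd : ∀ N, ∑ p ∈ Finset.univ.filter
      (fun p : I N × I N => p.1 < p.2 ∧ (X N p.1 ∩ X N p.2).Nonempty), a N p.2
      ≤ (C : ℝ) * ∑ i : I N, a N i := by
    intro N
    rw [Finset.sum_filter, ← Finset.univ_product_univ, Finset.sum_product, Finset.sum_comm,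
      Finset.mul_sum]
    refine Finset.sum_le_sum fun i' _ => ?_
    have : (∑ i : I N, if i < i' ∧ (X N i ∩ X N i').Nonempty then a N i' else 0)
        = ((Finset.univ.filter fun i : I N => i < i' ∧ (X N i ∩ X N i').Nonempty).card : ℝ)
          * a N i' := by
      rw [← Finset.sum_filter, Finset.sum_const, nsmul_eq_mul]
    rw [this]
    have hcard : (Finset.univ.filter fun i : I N =>
        i < i' ∧ (X N i ∩ X N i').Nonempty).card ≤ C := by
      refine le_trans (Finset.card_le_card ?_) (hC N i')
      intro i hi
      simp only [Finset.mem_filter, Finset.mem_univ, true_and] at hi ⊢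
      refine ⟨hi.1.ne, ?_⟩
      rw [Finset.inter_comm]
      exact hi.2
    exact mul_le_mul_of_nonneg_right (by exact_mod_cast hcard) (ha0 N i')
  -- the squeeze
  have hg0 : ∀ N, 0 ≤ g N := by
    intro N
    apply Finset.sum_nonneg; intro p _
    apply Finset.sum_nonneg; intro α _
    apply Finset.sum_nonneg; intro α' _
    positivity
  have hgle : ∀ N, g N ≤ 4 * C * (d ^ K : ℝ) * ‖(∑ i : I N, P N i) (A N)‖ := by
    intro N
    calc g N ≤ ∑ p ∈ Finset.univ.filter
          (fun p : I N × I N => p.1 < p.2 ∧ (X N p.1 ∩ X N p.2).Nonempty),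
          2 * (d ^ K : ℝ) * (a N p.1 + a N p.2) :=
        Finset.sum_le_sum fun p _ => hpair N p
      _ = 2 * (d ^ K : ℝ) * ((∑ p ∈ Finset.univ.filter
          (fun p : I N × I N => p.1 < p.2 ∧ (X N p.1 ∩ X N p.2).Nonempty), a N p.1)
          + ∑ p ∈ Finset.univ.filter
          (fun p : I N × I N => p.1 < p.2 ∧ (X N p.1 ∩ X N p.2).Nonempty), a N p.2) := by
          rw [← Finset.mul_sum, Finset.sum_add_distrib]
      _ ≤ 2 * (d ^ K : ℝ) * ((C : ℝ) * ∑ i : I N, a N i + (C : ℝ) * ∑ i : I N, a N i) :=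
          mul_le_mul_of_nonneg_left (add_le_add (hfst N) (hsnd N)) (by positivity)
      _ = 4 * C * (d ^ K : ℝ) * ∑ i : I N, a N i := by ring
      _ ≤ 4 * C * (d ^ K : ℝ) * ‖(∑ i : I N, P N i) (A N)‖ :=
          mul_le_mul_of_nonneg_left (hasum N) (by positivity)
  have hglim : Tendsto g atTop (nhds 0) := by
    refine squeeze_zero hg0 hgle ?_
    have := hlim.const_mul (4 * C * (d ^ K : ℝ))
    simpa using this
  -- identify the complex sum with the real sum
  have heq : (fun N => ∑ p ∈ Finset.univ.filter
          (fun p : I N × I N => p.1 < p.2 ∧ (X N p.1 ∩ X N p.2).Nonempty),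
        ∑ α : Fin (r N p.1), ∑ α' : Fin (r N p.2),
          (inner ℂ (A N)
            (((rankOne (pi N p.1 α) + rankOne (pi N p.2 α')) ∘L
              (rankOne (pi N p.1 α) + rankOne (pi N p.2 α'))) (A N)) : ℂ))
      = fun N => ((g N : ℝ) : ℂ) := by
    funext N
    rw [hg]
    rw [Complex.ofReal_sum]
    refine Finset.sum_congr rfl fun p _ => ?_
    rw [Complex.ofReal_sum]
    refine Finset.sum_congr rfl fun α _ => ?_
    rw [Complex.ofReal_sum]
    refine Finset.sum_congr rfl fun α' _ => ?_
    set T := rankOne (pi N p.1 α) + rankOne (pi N p.2 α') with hT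
    have hadj : ∀ x y : QuditSpace d (M N), (inner ℂ (T x) y : ℂ) = inner ℂ x (T y) := by
      intro x y
      rw [hT]
      simp only [ContinuousLinearMap.add_apply, inner_add_left, inner_add_right]
      rw [rankOne_inner_left, rankOne_inner_left]
    rw [ContinuousLinearMap.comp_apply, ← hadj, inner_self_eq_norm_sq_to_K]
    norm_cast
  rw [heq]
  have : Tendsto (fun N => ((g N : ℝ) : ℂ)) atTop (nhds ((0 : ℝ) : ℂ)) :=
    (Complex.continuous_ofReal.tendsto _).comp hglim
  simpa using this
end
end

section
/- Assume all the data of the standard scarred-sequence setting except the norm hypothesis on A_N, and instead suppose that for each N the unit vector A_N is an eigenvector of the reference Hamiltonian Σ_{i∈I_N} P_{N,i} with (necessarily nonnegative real) eigenvalue ε_N, and that ε_N → 0 as N → ∞. Suppose additionally given self-adjoint operators h_{N,i} supported on X_{N,i} with ‖h_{N,i}‖ ≤ C_h (C_h a constant independent of N and i), a depth D ∈ ℕ independent of N, and layers L_{N,1}, …, L_{N,D} ⊆ I_N with pairwise disjoint supports within each layer. Then (a) ‖(Σ_{i∈I_N} P_{N,i} ∘ h_{N,i} ∘ P_{N,i})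 A_N‖ → 0 as N → ∞, and (b) ‖U_N A_N − A_N‖ → 0 as N → ∞, where U_N = exp(√−1 · H_N^{(D)}) ∘ ⋯ ∘ exp(√−1 · H_N^{(1)}) with H_N^{(ℓ)} = Σ_{i∈L_{N,ℓ}} P_{N,i} ∘ h_{N,i} ∘ P_{N,i}. -/
open Filter
open scoped BigOperators

noncomputable section

namespace AqmbsAux

variable {d M : ℕ}

lemma inner_basisVec_left (s : Fin M → Fin d) (v : QuditSpace d M) :
    (inner ℂ (basisVec s) v : ℂ) = v s := by
  simp [basisVec, EuclideanSpace.inner_single_left]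

lemma decomp (v : QuditSpace d M) : ∑ t, v t • basisVec t = v := by
  have := (EuclideanSpace.basisFun (Fin M → Fin d) ℂ).sum_repr v
  simpa [EuclideanSpace.basisFun_apply, EuclideanSpace.basisFun_repr, basisVec] using this

lemma coord_ext {x y : QuditSpace d M}
    (hxy : ∀ s, (inner ℂ (basisVec s) x : ℂ) = inner ℂ (basisVec s) y) : x = y := by
  apply ext_inner_left ℂ
  intro w
  rw [← decomp w, sum_inner, sum_inner]
  exact Finset.sum_congr rfl fun s _ => by rw [inner_smul_left, inner_smul_left, hxy s]

lemma matElem_mul (S T : QuditSpace d M →L[ℂ] QuditSpace d M) (s t : Fin M → Fin d) :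
    matElem (S * T) s t = ∑ u, matElem S s u * matElem T u t := by
  have : (S * T) (basisVec t) = ∑ u, (T (basisVec t)) u • S (basisVec u) := by
    rw [ContinuousLinearMap.mul_apply]
    conv_lhs => rw [← decomp (T (basisVec t))]
    rw [map_sum]
    simp [ContinuousLinearMap.map_smul]
  rw [matElem, this, inner_sum]
  refine Finset.sum_congr rfl fun u _ => ?_
  rw [inner_smul_right]
  have h1 : (inner ℂ (basisVec s) (S (basisVec u)) : ℂ) = matElem S s u := rfl
  have h2 : (T (basisVec t)) u = matElem T u t := (inner_basisVec_left u _).symm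
  rw [h1, h2, mul_comm]

lemma ext_of_matElem {S T : QuditSpace d M →L[ℂ] QuditSpace d M}
    (hST : ∀ s t, matElem S s t = matElem T s t) : S = T := by
  refine ContinuousLinearMap.ext fun v => ?_
  rw [← decomp v, map_sum, map_sum]
  refine Finset.sum_congr rfl fun t _ => ?_
  rw [ContinuousLinearMap.map_smul, ContinuousLinearMap.map_smul]
  congr 1
  exact coord_ext fun s => hST s t

lemma commute_of_disjoint {X Y : Finset (Fin M)} (hXY : Disjoint X Y)
    {S T : QuditSpace d M →L[ℂ] QuditSpace d M}
    (hS : SupportedOn X S) (hT : SupportedOn Y T) : S * T = T * S := by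
  classical
  apply ext_of_matElem
  intro s t
  rw [matElem_mul, matElem_mul]
  by_cases hst : ∀ j, j ∉ X → j ∉ Y → s j = t j
  · set u₁ : Fin M → Fin d := fun j => if j ∈ X then t j else s j with hu₁
    set u₂ : Fin M → Fin d := fun j => if j ∈ Y then t j else s j with hu₂
    have hL : ∑ u, matElem S s u * matElem T u t = matElem S s u₁ * matElem T u₁ t := by
      refine Finset.sum_eq_single u₁ (fun u _ hu => ?_) (fun hu => absurd (Finset.mem_univ _) hu)
      obtain ⟨j, hj⟩ := Function.ne_iff.mp hu
      by_cases hjX : j ∈ X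
      · have h1 : u₁ j = t j := by simp [hu₁, hjX]
        have hjY : j ∉ Y := fun hh => (Finset.disjoint_left.mp hXY hjX) hh
        have : matElem T u t = 0 := hT.1 u t ⟨j, hjY, by rw [← h1]; exact hj⟩
        simp [this]
      · have h1 : u₁ j = s j := by simp [hu₁, hjX]
        have : matElem S s u = 0 := hS.1 s u ⟨j, hjX, by rw [← h1]; exact fun e => hj e.symm⟩
        simp [this]
    have hR : ∑ u, matElem T s u * matElem S u t = matElem T s u₂ * matElem S u₂ t := by
      refine Finset.sum_eq_single u₂ (fun u _ hu => ?_) (fun hu => absurd (Finset.mem_univ _) hu)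
      obtain ⟨j, hj⟩ := Function.ne_iff.mp hu
      by_cases hjY : j ∈ Y
      · have h1 : u₂ j = t j := by simp [hu₂, hjY]
        have hjX : j ∉ X := fun hh => (Finset.disjoint_left.mp hXY hh) hjY
        have : matElem S u t = 0 := hS.1 u t ⟨j, hjX, by rw [← h1]; exact hj⟩
        simp [this]
      · have h1 : u₂ j = s j := by simp [hu₂, hjY]
        have : matElem T s u = 0 := hT.1 s u ⟨j, hjY, by rw [← h1]; exact fun e => hj e.symm⟩
        simp [this]
    rw [hL, hR]
    have e1 : matElem S s u₁ = matElem S u₂ t := by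
      refine hS.2 s u₁ u₂ t (fun j hj => ?_) (fun j hj => ?_) (fun j hj => ?_) (fun j hj => ?_)
      · have : j ∉ Y := fun hh => (Finset.disjoint_left.mp hXY hj) hh
        simp [hu₂, this]
      · simp [hu₁, hj]
      · simp [hu₁, hj]
      · by_cases hjY : j ∈ Y
        · simp [hu₂, hjY]
        · simp only [hu₂]; rw [if_neg hjY]; exact hst j hj hjY
    have e2 : matElem T u₁ t = matElem T s u₂ := by
      refine (hT.2 u₁ t s u₂ (fun j hj => ?_) (fun j hj => ?_) (fun j hj => ?_)
        (fun j hj => ?_)).symm.symm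
      · have : j ∉ X := fun hh => (Finset.disjoint_left.mp hXY hh) hj
        simp [hu₁, this]
      · simp [hu₂, hj]
      · by_cases hjX : j ∈ X
        · simp [hu₁, hjX]
        · simp only [hu₁]; rw [if_neg hjX]; exact hst j hjX hj
      · simp [hu₂, hj]
    rw [e1, e2, mul_comm]
  · push_neg at hst
    obtain ⟨j, hjX, hjY, hst⟩ := hst
    rw [Finset.sum_eq_zero, Finset.sum_eq_zero]
    · intro u _
      by_cases hu : u j = t j
      · have : matElem T s u = 0 := hT.1 s u ⟨j, hjY, by rw [hu]; exact hst⟩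
        simp [this]
      · have : matElem S u t = 0 := hS.1 u t ⟨j, hjX, hu⟩
        simp [this]
    · intro u _
      by_cases hu : u j = t j
      · have : matElem S s u = 0 := hS.1 s u ⟨j, hjX, by rw [hu]; exact hst⟩
        simp [this]
      · have : matElem T u t = 0 := hT.1 u t ⟨j, hjY, hu⟩
        simp [this]

end AqmbsAux

namespace AqmbsAux


variable {d M : ℕ}

abbrev CLM (d M : ℕ) := QuditSpace d M →L[ℂ] QuditSpace d M

/-- symmetric operators are self-adjoint (star = id). -/
lemma star_eq_self_of_symm {T : CLM d M}
    (hT : ∀ v w : QuditSpace d M, (inner ℂ (T v) w : ℂ) = inner ℂ v (T w)) : star T = T :=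
  ContinuousLinearMap.isSelfAdjoint_iff_isSymmetric.mpr hT

lemma six_rearrange {R : Type*} [Ring R] (a b c e : R)
    (h1 : a * c = c * a) (h2 : a * e = e * a) (h3 : b * c = c * b) :
    a * b * a * (c * e * c) = a * c * (b * e) * (a * c) := by
  calc a * b * a * (c * e * c) = a * b * a * c * e * c := by rw [← mul_assoc, ← mul_assoc]
    _ = a * b * (a * c) * e * c := by rw [mul_assoc (a*b)]
    _ = a * b * (c * a) * e * c := by rw [h1]
    _ = a * (b * c) * a * e * c := by noncomm_ring
    _ = a * (c * b) * a * e * c := by rw [h3]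
    _ = a * c * b * (a * e) * c := by noncomm_ring
    _ = a * c * b * (e * a) * c := by rw [h2]
    _ = a * c * (b * e) * (a * c) := by noncomm_ring

lemma norm_proj_apply_le {P : CLM d M} (hP : IsOrthProj P) (v : QuditSpace d M) :
    ‖P v‖ ≤ ‖v‖ := by
  have h2 : (inner ℂ (P v) (P v) : ℂ) = inner ℂ v (P v) := by
    rw [hP.1 v (P v), ← ContinuousLinearMap.comp_apply, hP.2]
  have h3 : (‖P v‖ : ℝ)^2 ≤ ‖v‖ * ‖P v‖ := by
    have := norm_inner_le_norm (𝕜 := ℂ) v (P v)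
    calc (‖P v‖ : ℝ)^2 = ‖(inner ℂ (P v) (P v) : ℂ)‖ := by
          rw [inner_self_eq_norm_sq_to_K]
          simp [norm_pow, abs_of_nonneg (norm_nonneg (P v))]
      _ = ‖(inner ℂ v (P v) : ℂ)‖ := by rw [h2]
      _ ≤ ‖v‖ * ‖P v‖ := this
  rcases eq_or_lt_of_le (norm_nonneg (P v)) with h | h
  · rw [← h]; exact norm_nonneg v
  · nlinarith [h3]

lemma inner_self_proj {P : CLM d M} (hP : IsOrthProj P) (v : QuditSpace d M) :
    (inner ℂ v (P v) : ℂ) = ((‖P v‖^2 : ℝ) : ℂ) := by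
  have h2 : (inner ℂ v (P v) : ℂ) = inner ℂ (P v) (P v) := by
    rw [hP.1 v (P v), ← ContinuousLinearMap.comp_apply, hP.2]
  rw [h2, inner_self_eq_norm_sq_to_K]
  norm_cast

end AqmbsAux

namespace AqmbsAux

variable {d M : ℕ}

example (f g k : CLM d M) : (f ∘L g) ∘L k = f ∘L (g ∘L k) := rfl
example (f g k : CLM d M) : f * g * k = f ∘L g ∘L k := rfl

lemma key_bound {ι : Type} [Fintype ι] [DecidableEq ι]
    (C : ℕ) (Ch ε : ℝ) (hCh : 0 ≤ Ch)
    (X : ι → Finset (Fin M))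
    (P h : ι → CLM d M)
    (A : QuditSpace d M)
    (hC : ∀ i, (Finset.univ.filter fun i' : ι => i' ≠ i ∧ (X i ∩ X i').Nonempty).card ≤ C)
    (hproj : ∀ i, IsOrthProj (P i))
    (hsupp : ∀ i, SupportedOn (X i) (P i))
    (hA : ‖A‖ = 1)
    (heig : (∑ i, P i) A = (ε : ℂ) • A)
    (hhsa : ∀ i, ∀ v w : QuditSpace d M, (inner ℂ ((h i) v) w : ℂ) = inner ℂ v ((h i) w))
    (hhsupp : ∀ i, SupportedOn (X i) (h i))
    (hhnorm : ∀ i, ‖h i‖ ≤ Ch)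
    (S : Finset ι) :
    ‖(∑ i ∈ S, (P i) ∘L (h i) ∘L (P i)) A‖^2 ≤ Ch^2 * (ε^2 + (2*C+2)*ε) := by
  classical
  set T : ι → CLM d M := fun i => (P i) ∘L (h i) ∘L (P i) with hT
  set u : ι → QuditSpace d M := fun i => T i A with hu
  set p : ι → QuditSpace d M := fun i => P i A with hp
  -- basic facts
  have f1 : ∀ i, (inner ℂ A (p i) : ℂ) = ((‖p i‖^2 : ℝ) : ℂ) := fun i => inner_self_proj (hproj i) A
  have f2 : ∑ i, ‖p i‖^2 = ε := by
    have e1 : (inner ℂ A ((∑ i, P i) A) : ℂ) = (ε : ℂ) := by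
      rw [heig, inner_smul_right, inner_self_eq_norm_sq_to_K, hA]
      norm_num
    have e2 : (inner ℂ A ((∑ i, P i) A) : ℂ) = ∑ i, ((‖p i‖^2 : ℝ) : ℂ) := by
      rw [ContinuousLinearMap.sum_apply, inner_sum]
      exact Finset.sum_congr rfl fun i _ => f1 i
    exact_mod_cast e2.symm.trans e1
  have f3 : (0:ℝ) ≤ ε := by
    rw [← f2]
    exact Finset.sum_nonneg fun i _ => sq_nonneg _
  have f4 : ∀ i, ‖u i‖ ≤ Ch * ‖p i‖ := by
    intro i
    have e1 : u i = P i ((h i) (p i)) := rfl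
    rw [e1]
    calc ‖P i ((h i) (p i))‖ ≤ ‖(h i) (p i)‖ := norm_proj_apply_le (hproj i) _
      _ ≤ ‖h i‖ * ‖p i‖ := (h i).le_opNorm _
      _ ≤ Ch * ‖p i‖ := mul_le_mul_of_nonneg_right (hhnorm i) (norm_nonneg _)
  -- the hard pointwise estimate for pairs with disjoint supports
  have hard : ∀ i i', Disjoint (X i) (X i') →
      ((inner ℂ (u i) (u i') : ℂ).re ≤ Ch^2 * (inner ℂ (p i) (p i') : ℂ).re ∧
        0 ≤ (inner ℂ (p i) (p i') : ℂ).re) := by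
    intro i i' hdisj
    set Q : CLM d M := P i * P i' with hQ
    have cPP : P i * P i' = P i' * P i := commute_of_disjoint hdisj (hsupp i) (hsupp i')
    have cPh : P i * h i' = h i' * P i := commute_of_disjoint hdisj (hsupp i) (hhsupp i')
    have chP : h i * P i' = P i' * h i := commute_of_disjoint hdisj (hhsupp i) (hsupp i')
    have hTT : T i * T i' = Q * (h i * h i') * Q :=
      six_rearrange (P i) (h i) (P i') (h i') cPP cPh chP
    have sT : ∀ v w : QuditSpace d M, (inner ℂ (T i v) w : ℂ) = inner ℂ v (T i w) := by
      intro v w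
      show (inner ℂ (P i ((h i) (P i v))) w : ℂ) = inner ℂ v (P i ((h i) (P i w)))
      rw [(hproj i).1, hhsa i, (hproj i).1]
    have sQ : ∀ v w : QuditSpace d M, (inner ℂ (Q v) w : ℂ) = inner ℂ v (Q w) := by
      intro v w
      show (inner ℂ (P i (P i' v)) w : ℂ) = inner ℂ v (Q w)
      rw [(hproj i).1, (hproj i').1]
      have : P i' (P i w) = Q w := by
        rw [hQ, cPP]
        rfl
      rw [this]
    have hQQ : Q * Q = Q := by
      have hPi : P i * P i = P i := (hproj i).2
      have hPi' : P i' * P i' = P i' := (hproj i').2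
      calc Q * Q = P i * (P i' * P i) * P i' := by rw [hQ]; noncomm_ring
        _ = P i * (P i * P i') * P i' := by rw [← cPP]
        _ = (P i * P i) * (P i' * P i') := by noncomm_ring
        _ = P i * P i' := by rw [hPi, hPi']
    have key1 : (inner ℂ (u i) (u i') : ℂ) = inner ℂ (Q A) ((h i * h i') (Q A)) := by
      calc (inner ℂ (T i A) (T i' A) : ℂ) = inner ℂ A (T i (T i' A)) := sT A (T i' A)
        _ = inner ℂ A ((T i * T i') A) := by rw [ContinuousLinearMap.mul_apply]
        _ = inner ℂ A ((Q * (h i * h i') * Q) A) := by rw [hTT]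
        _ = inner ℂ A (Q ((h i * h i') (Q A))) := by
            rw [ContinuousLinearMap.mul_apply, ContinuousLinearMap.mul_apply]
        _ = inner ℂ (Q A) ((h i * h i') (Q A)) := (sQ A _).symm
    have key2 : (inner ℂ (p i) (p i') : ℂ) = ((‖Q A‖^2 : ℝ) : ℂ) := by
      calc (inner ℂ (P i A) (P i' A) : ℂ) = inner ℂ A (P i (P i' A)) := (hproj i).1 A (P i' A)
        _ = inner ℂ A ((Q * Q) A) := by
            rw [hQQ, ContinuousLinearMap.mul_apply]
        _ = inner ℂ (Q A) (Q A) := by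
            rw [ContinuousLinearMap.mul_apply]
            exact (sQ A (Q A)).symm
        _ = ((‖Q A‖^2 : ℝ) : ℂ) := by rw [inner_self_eq_norm_sq_to_K]; norm_cast
    have re2 : (inner ℂ (p i) (p i') : ℂ).re = ‖Q A‖^2 := by rw [key2, Complex.ofReal_re]
    constructor
    · rw [re2, key1]
      have hb : ‖(h i * h i') (Q A)‖ ≤ Ch * (Ch * ‖Q A‖) := by
        calc ‖(h i) ((h i') (Q A))‖ ≤ ‖h i‖ * ‖(h i') (Q A)‖ := (h i).le_opNorm _
          _ ≤ Ch * ‖(h i') (Q A)‖ := mul_le_mul_of_nonneg_right (hhnorm i) (norm_nonneg _)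
          _ ≤ Ch * (Ch * ‖Q A‖) := by
              refine mul_le_mul_of_nonneg_left ?_ hCh
              calc ‖(h i') (Q A)‖ ≤ ‖h i'‖ * ‖Q A‖ := (h i').le_opNorm _
                _ ≤ Ch * ‖Q A‖ := mul_le_mul_of_nonneg_right (hhnorm i') (norm_nonneg _)
      calc (inner ℂ (Q A) ((h i * h i') (Q A)) : ℂ).re
          ≤ ‖(inner ℂ (Q A) ((h i * h i') (Q A)) : ℂ)‖ := Complex.re_le_norm _
        _ = ‖(inner ℂ (Q A) ((h i * h i') (Q A)) : ℂ)‖ := rfl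
        _ ≤ ‖Q A‖ * ‖(h i * h i') (Q A)‖ := norm_inner_le_norm _ _
        _ ≤ ‖Q A‖ * (Ch * (Ch * ‖Q A‖)) := mul_le_mul_of_nonneg_left hb (norm_nonneg _)
        _ = Ch^2 * ‖Q A‖^2 := by ring
    · rw [re2]; exact sq_nonneg _
  -- counting
  have cnt : ∀ i : ι, (Finset.univ.filter fun i' : ι => (X i ∩ X i').Nonempty).card ≤ C + 1 := by
    intro i
    have hsub : (Finset.univ.filter fun i' : ι => (X i ∩ X i').Nonempty) ⊆
        insert i (Finset.univ.filter fun i' : ι => i' ≠ i ∧ (X i ∩ X i').Nonempty) := by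
      intro i' hi'
      simp only [Finset.mem_filter, Finset.mem_univ, true_and] at hi'
      by_cases hii : i' = i
      · rw [hii]; exact Finset.mem_insert_self _ _
      · exact Finset.mem_insert_of_mem (by simp [hii, hi'])
    calc (Finset.univ.filter fun i' : ι => (X i ∩ X i').Nonempty).card
        ≤ (insert i (Finset.univ.filter fun i' : ι =>
            i' ≠ i ∧ (X i ∩ X i').Nonempty)).card := Finset.card_le_card hsub
      _ ≤ (Finset.univ.filter fun i' : ι => i' ≠ i ∧ (X i ∩ X i').Nonempty).card + 1 :=
          Finset.card_insert_le _ _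
      _ ≤ C + 1 := Nat.add_le_add_right (hC i) 1
  -- pointwise bounds
  set base : ι → ι → ℝ := fun i i' =>
    if (X i ∩ X i').Nonempty then (‖p i‖^2 + ‖p i'‖^2)/2 else (inner ℂ (p i) (p i') : ℂ).re
    with hbase
  have hdisj_of : ∀ i i' : ι, ¬(X i ∩ X i').Nonempty → Disjoint (X i) (X i') := fun i i' hrel =>
    Finset.disjoint_iff_inter_eq_empty.mpr (Finset.not_nonempty_iff_eq_empty.mp hrel)
  have pt1 : ∀ i i', (inner ℂ (u i) (u i') : ℂ).re ≤ Ch^2 * base i i' := by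
    intro i i'
    by_cases hrel : (X i ∩ X i').Nonempty
    · rw [hbase]; simp only [if_pos hrel]
      calc (inner ℂ (u i) (u i') : ℂ).re
          ≤ ‖(inner ℂ (u i) (u i') : ℂ)‖ := Complex.re_le_norm _
        _ = ‖(inner ℂ (u i) (u i') : ℂ)‖ := rfl
        _ ≤ ‖u i‖ * ‖u i'‖ := norm_inner_le_norm _ _
        _ ≤ (Ch * ‖p i‖) * (Ch * ‖p i'‖) :=
            mul_le_mul (f4 i) (f4 i') (norm_nonneg _) (by positivity)
        _ ≤ Ch^2 * ((‖p i‖^2 + ‖p i'‖^2)/2) := by nlinarith [sq_nonneg (‖p i‖ - ‖p i'‖), sq_nonneg Ch]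
    · rw [hbase]; simp only [if_neg hrel]
      exact (hard i i' (hdisj_of i i' hrel)).1
  have pt0 : ∀ i i', 0 ≤ base i i' := by
    intro i i'
    by_cases hrel : (X i ∩ X i').Nonempty
    · rw [hbase]; simp only [if_pos hrel]; positivity
    · rw [hbase]; simp only [if_neg hrel]
      exact (hard i i' (hdisj_of i i' hrel)).2
  have ptbase : ∀ i i', base i i' ≤ (inner ℂ (p i) (p i') : ℂ).re
      + (if (X i ∩ X i').Nonempty then ‖p i‖^2 + ‖p i'‖^2 else 0) := by
    intro i i'
    by_cases hrel : (X i ∩ X i').Nonempty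
    · rw [hbase]; simp only [if_pos hrel]
      have h1 : |(inner ℂ (p i) (p i') : ℂ).re| ≤ ‖p i‖ * ‖p i'‖ := by
        calc |(inner ℂ (p i) (p i') : ℂ).re| ≤ ‖(inner ℂ (p i) (p i') : ℂ)‖ :=
              Complex.abs_re_le_norm _
          _ = ‖(inner ℂ (p i) (p i') : ℂ)‖ := rfl
          _ ≤ ‖p i‖ * ‖p i'‖ := norm_inner_le_norm _ _
      have h2 : ‖p i‖ * ‖p i'‖ ≤ (‖p i‖^2 + ‖p i'‖^2)/2 := by
        nlinarith [sq_nonneg (‖p i‖ - ‖p i'‖)]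
      have h3 := (abs_le.mp h1).1
      linarith
    · rw [hbase]; simp only [if_neg hrel]
      simp
  -- expansion of the squared norm
  have expand : ∀ (s : Finset ι) (q : ι → QuditSpace d M),
      ‖∑ i ∈ s, q i‖^2 = ∑ i ∈ s, ∑ i' ∈ s, (inner ℂ (q i) (q i') : ℂ).re := by
    intro s q
    have e1 : (inner ℂ (∑ i ∈ s, q i) (∑ i' ∈ s, q i') : ℂ)
        = ∑ i ∈ s, ∑ i' ∈ s, (inner ℂ (q i) (q i') : ℂ) := by
      rw [sum_inner]
      exact Finset.sum_congr rfl fun i _ => inner_sum _ _ _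
    calc ‖∑ i ∈ s, q i‖^2
        = ((inner ℂ (∑ i ∈ s, q i) (∑ i' ∈ s, q i') : ℂ)).re := by
          rw [inner_self_eq_norm_sq_to_K]
          norm_cast
      _ = ∑ i ∈ s, ∑ i' ∈ s, (inner ℂ (q i) (q i') : ℂ).re := by
          rw [e1, Complex.re_sum]
          exact Finset.sum_congr rfl fun i _ => Complex.re_sum _ _
  have e0 : (∑ i ∈ S, T i) A = ∑ i ∈ S, u i := by
    rw [ContinuousLinearMap.sum_apply]
  -- sum over all pairs of re ⟪p i, p i'⟫
  have sum_pp : ∑ i : ι, ∑ i' : ι, (inner ℂ (p i) (p i') : ℂ).re = ε^2 := by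
    have e2 : ∑ i : ι, p i = (ε : ℂ) • A := by
      rw [← heig, ContinuousLinearMap.sum_apply]
    have e3 : ‖∑ i : ι, p i‖^2 = ε^2 := by
      rw [e2, norm_smul, hA, mul_one, Complex.norm_real]
      exact sq_abs ε
    rw [← expand Finset.univ p, e3]
  -- counting bound
  have S1 : ∀ (q : ι → ℝ), (∀ i, 0 ≤ q i) →
      ∑ i : ι, ∑ i' : ι, (if (X i ∩ X i').Nonempty then q i else 0) ≤ ((C : ℝ)+1) * ∑ i, q i := by
    intro q hq
    have inner_eq : ∀ i, ∑ i' : ι, (if (X i ∩ X i').Nonempty then q i else 0)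
        = ((Finset.univ.filter fun i' : ι => (X i ∩ X i').Nonempty).card : ℝ) * q i := by
      intro i
      rw [← Finset.sum_filter, Finset.sum_const, nsmul_eq_mul]
    calc ∑ i : ι, ∑ i' : ι, (if (X i ∩ X i').Nonempty then q i else 0)
        = ∑ i : ι, ((Finset.univ.filter fun i' : ι => (X i ∩ X i').Nonempty).card : ℝ) * q i :=
          Finset.sum_congr rfl fun i _ => inner_eq i
      _ ≤ ∑ i : ι, ((C : ℝ)+1) * q i := by
          refine Finset.sum_le_sum fun i _ => mul_le_mul_of_nonneg_right ?_ (hq i)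
          have := cnt i
          exact_mod_cast Nat.cast_le.mpr this
      _ = ((C : ℝ)+1) * ∑ i, q i := (Finset.mul_sum _ _ _).symm
  have sum_ite : ∑ i : ι, ∑ i' : ι, (if (X i ∩ X i').Nonempty then ‖p i‖^2 + ‖p i'‖^2 else 0)
      ≤ (2*(C:ℝ)+2) * ε := by
    have split : ∑ i : ι, ∑ i' : ι, (if (X i ∩ X i').Nonempty then ‖p i‖^2 + ‖p i'‖^2 else 0)
        = (∑ i : ι, ∑ i' : ι, (if (X i ∩ X i').Nonempty then ‖p i‖^2 else 0))
          + ∑ i : ι, ∑ i' : ι, (if (X i ∩ X i').Nonempty then ‖p i'‖^2 else 0) := by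
      rw [← Finset.sum_add_distrib]
      refine Finset.sum_congr rfl fun i _ => ?_
      rw [← Finset.sum_add_distrib]
      refine Finset.sum_congr rfl fun i' _ => ?_
      split_ifs <;> ring
    have b1 : ∑ i : ι, ∑ i' : ι, (if (X i ∩ X i').Nonempty then ‖p i‖^2 else 0)
        ≤ ((C : ℝ)+1) * ε := by
      have := S1 (fun i => ‖p i‖^2) (fun i => sq_nonneg _)
      rwa [f2] at this
    have b2 : ∑ i : ι, ∑ i' : ι, (if (X i ∩ X i').Nonempty then ‖p i'‖^2 else 0)
        ≤ ((C : ℝ)+1) * ε := by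
      rw [Finset.sum_comm]
      have swap_eq : ∑ i' : ι, ∑ i : ι, (if (X i ∩ X i').Nonempty then ‖p i'‖^2 else 0)
          = ∑ i' : ι, ∑ i : ι, (if (X i' ∩ X i).Nonempty then ‖p i'‖^2 else 0) := by
        refine Finset.sum_congr rfl fun i' _ => Finset.sum_congr rfl fun i _ => ?_
        rw [Finset.inter_comm]
      rw [swap_eq]
      have := S1 (fun i' => ‖p i'‖^2) (fun i' => sq_nonneg _)
      rwa [f2] at this
    rw [split]
    linarith
  -- put everything together
  rw [e0, expand S u]
  have c1 : ∑ i ∈ S, ∑ i' ∈ S, (inner ℂ (u i) (u i') : ℂ).re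
      ≤ ∑ i ∈ S, ∑ i' ∈ S, Ch^2 * base i i' :=
    Finset.sum_le_sum fun i _ => Finset.sum_le_sum fun i' _ => pt1 i i'
  have hnn : ∀ i i', 0 ≤ Ch^2 * base i i' := fun i i' => mul_nonneg (sq_nonneg _) (pt0 i i')
  have c2 : ∑ i ∈ S, ∑ i' ∈ S, Ch^2 * base i i' ≤ ∑ i : ι, ∑ i' : ι, Ch^2 * base i i' := by
    calc ∑ i ∈ S, ∑ i' ∈ S, Ch^2 * base i i'
        ≤ ∑ i ∈ S, ∑ i' : ι, Ch^2 * base i i' := Finset.sum_le_sum fun i _ =>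
          Finset.sum_le_sum_of_subset_of_nonneg (Finset.subset_univ S) fun i' _ _ => hnn i i'
      _ ≤ ∑ i : ι, ∑ i' : ι, Ch^2 * base i i' := Finset.sum_le_sum_of_subset_of_nonneg
          (Finset.subset_univ S) fun i _ _ => Finset.sum_nonneg fun i' _ => hnn i i'
  have c3 : ∑ i : ι, ∑ i' : ι, Ch^2 * base i i' = Ch^2 * ∑ i : ι, ∑ i' : ι, base i i' := by
    rw [Finset.mul_sum]
    exact Finset.sum_congr rfl fun i _ => (Finset.mul_sum _ _ _).symm
  have c4 : ∑ i : ι, ∑ i' : ι, base i i' ≤ ε^2 + (2*(C:ℝ)+2) * ε := by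
    have step : ∑ i : ι, ∑ i' : ι, base i i'
        ≤ ∑ i : ι, ∑ i' : ι, ((inner ℂ (p i) (p i') : ℂ).re
            + (if (X i ∩ X i').Nonempty then ‖p i‖^2 + ‖p i'‖^2 else 0)) :=
      Finset.sum_le_sum fun i _ => Finset.sum_le_sum fun i' _ => ptbase i i'
    have split2 : ∑ i : ι, ∑ i' : ι, ((inner ℂ (p i) (p i') : ℂ).re
            + (if (X i ∩ X i').Nonempty then ‖p i‖^2 + ‖p i'‖^2 else 0))
        = (∑ i : ι, ∑ i' : ι, (inner ℂ (p i) (p i') : ℂ).re)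
          + ∑ i : ι, ∑ i' : ι, (if (X i ∩ X i').Nonempty then ‖p i‖^2 + ‖p i'‖^2 else 0) := by
      rw [← Finset.sum_add_distrib]
      exact Finset.sum_congr rfl fun i _ => Finset.sum_add_distrib
    rw [split2, sum_pp] at step
    linarith
  calc ∑ i ∈ S, ∑ i' ∈ S, (inner ℂ (u i) (u i') : ℂ).re
      ≤ ∑ i ∈ S, ∑ i' ∈ S, Ch^2 * base i i' := c1
    _ ≤ ∑ i : ι, ∑ i' : ι, Ch^2 * base i i' := c2
    _ = Ch^2 * ∑ i : ι, ∑ i' : ι, base i i' := c3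
    _ ≤ Ch^2 * (ε^2 + (2*(C:ℝ)+2) * ε) := mul_le_mul_of_nonneg_left c4 (sq_nonneg _)
    _ = Ch^2 * (ε^2 + (2*(C:ℕ)+2) * ε) := by push_cast; ring

end AqmbsAux

namespace AqmbsAux

open NormedSpace

variable {d M : ℕ}

lemma exp_skew_norm_apply (B : CLM d M) (hB : star B = -B) (v : QuditSpace d M) :
    ‖exp B v‖ = ‖v‖ := by
  have h1 : star (exp B) * exp B = 1 := by
    let +nondep : NormedAlgebra ℚ (CLM d M) := .restrictScalars ℚ ℂ (CLM d M)
    rw [star_exp, hB, ← exp_add_of_commute (Commute.neg_left (Commute.refl B))]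
    simp [exp_zero]
  have h2 : (inner ℂ (exp B v) (exp B v) : ℂ) = inner ℂ v v := by
    have e := ContinuousLinearMap.adjoint_inner_left (exp B) v (exp B v)
    have e2 : (ContinuousLinearMap.adjoint (exp B)) (exp B v) = v := by
      rw [← ContinuousLinearMap.star_eq_adjoint]
      have e3 : star (exp B) ((exp B) v) = (star (exp B) * exp B) v := rfl
      rw [e3, h1, ContinuousLinearMap.one_apply]
    rw [e2] at e
    exact e.symm
  rw [inner_self_eq_norm_sq_to_K, inner_self_eq_norm_sq_to_K] at h2
  have h4 : ‖exp B v‖^2 = ‖v‖^2 := by exact_mod_cast h2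
  calc ‖exp B v‖ = Real.sqrt (‖exp B v‖^2) := (Real.sqrt_sq (norm_nonneg _)).symm
    _ = Real.sqrt (‖v‖^2) := by rw [h4]
    _ = ‖v‖ := Real.sqrt_sq (norm_nonneg _)

set_option maxHeartbeats 1000000 in
lemma exp_I_smul_sub_norm_le (H : CLM d M) (hH : star H = H) (v : QuditSpace d M) :
    ‖exp (Complex.I • H) v - v‖ ≤ ‖H v‖ := by
  set B : CLM d M := Complex.I • H with hBdef
  have skew : ∀ t : ℝ, star ((t : ℂ) • B) = -((t : ℂ) • B) := by
    intro t
    rw [hBdef, star_smul, star_smul, hH, Complex.star_def, Complex.conj_ofReal, Complex.conj_I,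
      smul_smul, smul_smul]
    have e : (↑t * -Complex.I : ℂ) = -(↑t * Complex.I) := by ring
    rw [e]
    exact neg_smul (↑t * Complex.I) H
  have iso : ∀ (t : ℝ) (w : QuditSpace d M), ‖exp ((t : ℂ) • B) w‖ = ‖w‖ := fun t w =>
    exp_skew_norm_apply _ (skew t) w
  have deriv : ∀ t : ℝ, HasDerivAt (fun s : ℝ => exp ((s : ℂ) • B) v)
      ((B * exp ((t : ℂ) • B)) v) t := by
    intro t
    have h1 : HasDerivAt (fun u : ℂ => exp (u • B)) (B * exp ((t : ℂ) • B)) ((t : ℝ) : ℂ) :=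
      hasDerivAt_exp_smul_const' B ((t : ℝ) : ℂ)
    have hre : HasDerivAt (fun s : ℝ => (s : ℂ)) 1 t := by
      exact Complex.ofRealCLM.hasDerivAt (x := t)
    have h2 : HasDerivAt (fun s : ℝ => exp ((s : ℂ) • B)) (B * exp ((t : ℂ) • B)) t := by
      have := h1.scomp t hre
      rw [one_smul] at this
      exact this
    have hev : HasFDerivAt (fun T : CLM d M => T v)
        ((((ContinuousLinearMap.apply ℂ (QuditSpace d M)) v).restrictScalars ℝ))
        (exp ((t : ℂ) • B)) :=
      ((((ContinuousLinearMap.apply ℂ (QuditSpace d M)) v).restrictScalars ℝ)).hasFDerivAt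
    have h3 := hev.comp_hasDerivAt t h2
    exact h3
  have bound : ∀ t : ℝ, ‖(B * exp ((t : ℂ) • B)) v‖ ≤ ‖H v‖ := by
    intro t
    have comm : Commute B (exp ((t : ℂ) • B)) :=
      (((Commute.refl B).smul_right ((t : ℂ)))).exp_right
    have ecalc : ‖(B * exp ((t : ℂ) • B)) v‖ = ‖H v‖ :=
      calc ‖(B * exp ((t : ℂ) • B)) v‖ = ‖(exp ((t : ℂ) • B) * B) v‖ := by rw [comm.eq]
        _ = ‖exp ((t : ℂ) • B) (B v)‖ := by rw [ContinuousLinearMap.mul_apply]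
        _ = ‖B v‖ := iso t (B v)
        _ = ‖H v‖ := by
            rw [hBdef, ContinuousLinearMap.smul_apply, norm_smul, Complex.norm_I, one_mul]
    exact le_of_eq ecalc
  have mvt := Convex.norm_image_sub_le_of_norm_hasDerivWithin_le
    (f := fun t : ℝ => exp ((t : ℂ) • B) v)
    (f' := fun t : ℝ => (B * exp ((t : ℂ) • B)) v) (C := ‖H v‖) (s := Set.univ)
    (fun t _ => (deriv t).hasDerivWithinAt) (fun t _ => bound t) convex_univ
    (Set.mem_univ (0 : ℝ)) (Set.mem_univ (1 : ℝ))
  have ezero : (((0 : ℝ) : ℂ)) • B = (0 : CLM d M) := by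
    rw [Complex.ofReal_zero]
    exact zero_smul ℂ B
  have eone : (((1 : ℝ) : ℂ)) • B = B := by
    rw [Complex.ofReal_one]
    exact one_smul ℂ B
  have m2 : ‖exp B v - v‖ ≤ ‖H v‖ * ‖(1 : ℝ) - (0 : ℝ)‖ := by
    have m3 := mvt
    simp only [eone, ezero, exp_zero, ContinuousLinearMap.one_apply] at m3
    exact m3
  have enorm : ‖(1 : ℝ) - (0 : ℝ)‖ = 1 := by norm_num
  rw [enorm, mul_one] at m2
  exact m2

lemma skew_I_smul (H : CLM d M) (hH : star H = H) :
    star (Complex.I • H) = -(Complex.I • H) := by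
  rw [star_smul, hH, Complex.star_def, Complex.conj_I]
  exact neg_smul Complex.I H

lemma list_prod_sub (l : List (CLM d M)) (hl : ∀ g ∈ l, ∀ w : QuditSpace d M, ‖g w‖ ≤ ‖w‖)
    (v : QuditSpace d M) :
    ‖l.prod v - v‖ ≤ (l.map fun g => ‖g v - v‖).sum := by
  induction l with
  | nil => simp
  | cons g l ih =>
    have hg := hl g (List.mem_cons_self)
    have hrest : ∀ g' ∈ l, ∀ w : QuditSpace d M, ‖g' w‖ ≤ ‖w‖ := fun g' hg' =>
      hl g' (List.mem_cons_of_mem g hg')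
    have e : (g :: l).prod v = g (l.prod v) := by rw [List.prod_cons]; rfl
    calc ‖(g :: l).prod v - v‖ = ‖(g (l.prod v) - g v) + (g v - v)‖ := by
          rw [e, sub_add_sub_cancel]
      _ ≤ ‖g (l.prod v) - g v‖ + ‖g v - v‖ := norm_add_le _ _
      _ ≤ ‖l.prod v - v‖ + ‖g v - v‖ := by
          have e2 : g (l.prod v) - g v = g (l.prod v - v) := (map_sub g _ _).symm
          rw [e2]
          exact add_le_add (hg _) le_rfl
      _ ≤ (l.map fun g => ‖g v - v‖).sum + ‖g v - v‖ := add_le_add (ih hrest) le_rfl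
      _ = ((g :: l).map fun g => ‖g v - v‖).sum := by
          rw [List.map_cons, List.sum_cons]
          ring

end AqmbsAux

open AqmbsAux in
set_option maxHeartbeats 1000000 in
/-- **Theorem 2 of the paper**: if the unit vectors `A_N` are eigenvectors of the reference
Hamiltonian `∑ i P_{N,i}` with eigenvalues `ε_N → 0` (gapless excitations), then (a) they are
asymptotically annihilated by the deformed Hamiltonian `∑ i P_{N,i} ∘ h_{N,i} ∘ P_{N,i}`, and
(b) they are asymptotic fixed points of the finite-depth circuit
`U_N = exp(i H_N^{(D)}) ∘ ⋯ ∘ exp(i H_N^{(1)})`,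
`H_N^{(ℓ)} = ∑_{i ∈ L_{N,ℓ}} P_{N,i} ∘ h_{N,i} ∘ P_{N,i}`: they are asymptotic quantum
many-body scars. -/
theorem aqmbs_of_gapless_excitations
    (d K C : ℕ) (hd : 2 ≤ d)
    (M : ℕ → ℕ) (I : ℕ → Type) [∀ N, Fintype (I N)] [∀ N, DecidableEq (I N)]
    (X : ∀ N, I N → Finset (Fin (M N)))
    (P : ∀ N, (i : I N) → QuditSpace d (M N) →L[ℂ] QuditSpace d (M N))
    (A : ∀ N, QuditSpace d (M N))
    (hK : ∀ N (i : I N), (X N i).card ≤ K)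
    (hC : ∀ N (i : I N),
      (Finset.univ.filter fun i' : I N => i' ≠ i ∧ (X N i ∩ X N i').Nonempty).card ≤ C)
    (hproj : ∀ N (i : I N), IsOrthProj (P N i))
    (hsupp : ∀ N (i : I N), SupportedOn (X N i) (P N i))
    (hA : ∀ N, ‖A N‖ = 1)
    (eps : ℕ → ℝ)
    (heig : ∀ N, (∑ i : I N, P N i) (A N) = (eps N : ℂ) • A N)
    (heps : Tendsto eps atTop (nhds 0))
    (Ch : ℝ) (hCh : 0 ≤ Ch)
    (h : ∀ N, (i : I N) → QuditSpace d (M N) →L[ℂ] QuditSpace d (M N))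
    (hhsa : ∀ N (i : I N), ∀ v w : QuditSpace d (M N),
      (inner ℂ ((h N i) v) w : ℂ) = inner ℂ v ((h N i) w))
    (hhsupp : ∀ N (i : I N), SupportedOn (X N i) (h N i))
    (hhnorm : ∀ N (i : I N), ‖h N i‖ ≤ Ch)
    (D : ℕ) (L : ∀ N, Fin D → Finset (I N))
    (hLdisj : ∀ N (ℓ : Fin D), ∀ i ∈ L N ℓ, ∀ i' ∈ L N ℓ, i ≠ i' → Disjoint (X N i) (X N i'))
 :
    Tendsto (fun N => ‖(∑ i : I N, (P N i) ∘L (h N i) ∘L (P N i)) (A N)‖) atTop (nhds 0) ∧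
    Tendsto (fun N =>
        ‖(((List.ofFn fun ℓ : Fin D =>
          NormedSpace.exp (Complex.I •
            (∑ i ∈ L N ℓ, (P N i) ∘L (h N i) ∘L (P N i)))).reverse).prod) (A N) - A N‖)
      atTop (nhds 0) := by
  classical
  -- the quantitative bound
  set bnd : ℕ → ℝ := fun N => Ch^2 * ((eps N)^2 + (2*(C:ℝ)+2) * eps N) with hbnd
  have key : ∀ N (S : Finset (I N)),
      ‖(∑ i ∈ S, (P N i) ∘L (h N i) ∘L (P N i)) (A N)‖^2 ≤ bnd N := by
    intro N S
    exact key_bound C Ch (eps N) hCh (X N) (P N) (h N) (A N) (hC N) (hproj N) (hsupp N)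
      (hA N) (heig N) (hhsa N) (hhsupp N) (hhnorm N) S
  have keynorm : ∀ N (S : Finset (I N)),
      ‖(∑ i ∈ S, (P N i) ∘L (h N i) ∘L (P N i)) (A N)‖ ≤ Real.sqrt (bnd N) := by
    intro N S
    calc ‖(∑ i ∈ S, (P N i) ∘L (h N i) ∘L (P N i)) (A N)‖
        = Real.sqrt (‖(∑ i ∈ S, (P N i) ∘L (h N i) ∘L (P N i)) (A N)‖^2) :=
          (Real.sqrt_sq (norm_nonneg _)).symm
      _ ≤ Real.sqrt (bnd N) := Real.sqrt_le_sqrt (key N S)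
  -- the bound tends to 0
  have hbnd0 : Tendsto bnd atTop (nhds 0) := by
    have hcont : Continuous (fun x : ℝ => Ch^2 * (x^2 + (2*(C:ℝ)+2) * x)) :=
      continuous_const.mul ((continuous_pow 2).add (continuous_const.mul continuous_id))
    have := (hcont.tendsto 0).comp heps
    simp only [Function.comp_def] at this
    simpa using this
  have hsqrt : Tendsto (fun N => Real.sqrt (bnd N)) atTop (nhds 0) := by
    have := (Real.continuous_sqrt.tendsto 0).comp hbnd0
    simp only [Function.comp_def] at this
    simpa using this
  constructor
  · exact squeeze_zero (fun N => norm_nonneg _) (fun N => keynorm N Finset.univ) hsqrt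
  · -- part (b)
    -- self-adjointness of the layer Hamiltonians
    have hTsym : ∀ N (i : I N) (v w : QuditSpace d (M N)),
        (inner ℂ (((P N i) ∘L (h N i) ∘L (P N i)) v) w : ℂ)
          = inner ℂ v (((P N i) ∘L (h N i) ∘L (P N i)) w) := by
      intro N i v w
      show (inner ℂ ((P N i) ((h N i) ((P N i) v))) w : ℂ)
        = inner ℂ v ((P N i) ((h N i) ((P N i) w)))
      rw [(hproj N i).1, hhsa N i, (hproj N i).1]
    have hHsa : ∀ N (ℓ : Fin D),
        star (∑ i ∈ L N ℓ, (P N i) ∘L (h N i) ∘L (P N i))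
          = ∑ i ∈ L N ℓ, (P N i) ∘L (h N i) ∘L (P N i) := by
      intro N ℓ
      apply star_eq_self_of_symm
      intro v w
      rw [ContinuousLinearMap.sum_apply, ContinuousLinearMap.sum_apply, sum_inner, inner_sum]
      exact Finset.sum_congr rfl fun i _ => hTsym N i v w
    have hskew : ∀ N (ℓ : Fin D),
        star (Complex.I • (∑ i ∈ L N ℓ, (P N i) ∘L (h N i) ∘L (P N i)))
          = -(Complex.I • (∑ i ∈ L N ℓ, (P N i) ∘L (h N i) ∘L (P N i))) := by
      intro N ℓ
      exact skew_I_smul _ (hHsa N ℓ)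
    -- isometry of the layer unitaries
    have hiso : ∀ N, ∀ g ∈ (List.ofFn fun ℓ : Fin D =>
        NormedSpace.exp (Complex.I •
          (∑ i ∈ L N ℓ, (P N i) ∘L (h N i) ∘L (P N i)))).reverse,
        ∀ w : QuditSpace d (M N), ‖g w‖ ≤ ‖w‖ := by
      intro N g hg w
      rw [List.mem_reverse, List.mem_ofFn] at hg
      obtain ⟨ℓ, rfl⟩ := hg
      exact le_of_eq (exp_skew_norm_apply _ (hskew N ℓ) w)
    -- per-N bound
    have hb : ∀ N, ‖(((List.ofFn fun ℓ : Fin D =>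
          NormedSpace.exp (Complex.I •
            (∑ i ∈ L N ℓ, (P N i) ∘L (h N i) ∘L (P N i)))).reverse).prod) (A N) - A N‖
        ≤ (D : ℝ) * Real.sqrt (bnd N) := by
      intro N
      have step1 := list_prod_sub _ (hiso N) (A N)
      have step2 : (((List.ofFn fun ℓ : Fin D =>
          NormedSpace.exp (Complex.I •
            (∑ i ∈ L N ℓ, (P N i) ∘L (h N i) ∘L (P N i)))).reverse).map
              fun g => ‖g (A N) - A N‖).sum
          = ∑ ℓ : Fin D, ‖NormedSpace.exp (Complex.I •
            (∑ i ∈ L N ℓ, (P N i) ∘L (h N i) ∘L (P N i))) (A N) - A N‖ := by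
        rw [List.map_reverse, List.sum_reverse, List.map_ofFn, List.sum_ofFn]
        rfl
      have step3 : ∑ ℓ : Fin D, ‖NormedSpace.exp (Complex.I •
            (∑ i ∈ L N ℓ, (P N i) ∘L (h N i) ∘L (P N i))) (A N) - A N‖
          ≤ (D : ℝ) * Real.sqrt (bnd N) := by
        calc ∑ ℓ : Fin D, ‖NormedSpace.exp (Complex.I •
              (∑ i ∈ L N ℓ, (P N i) ∘L (h N i) ∘L (P N i))) (A N) - A N‖
            ≤ ∑ _ℓ : Fin D, Real.sqrt (bnd N) := by
              refine Finset.sum_le_sum fun ℓ _ => ?_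
              calc ‖NormedSpace.exp (Complex.I •
                    (∑ i ∈ L N ℓ, (P N i) ∘L (h N i) ∘L (P N i))) (A N) - A N‖
                  ≤ ‖(∑ i ∈ L N ℓ, (P N i) ∘L (h N i) ∘L (P N i)) (A N)‖ :=
                    exp_I_smul_sub_norm_le _ (hHsa N ℓ) (A N)
                _ ≤ Real.sqrt (bnd N) := keynorm N (L N ℓ)
          _ = (D : ℝ) * Real.sqrt (bnd N) := by
              rw [Finset.sum_const, Finset.card_univ, Fintype.card_fin, nsmul_eq_mul]
      calc ‖(((List.ofFn fun ℓ : Fin D =>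
          NormedSpace.exp (Complex.I •
            (∑ i ∈ L N ℓ, (P N i) ∘L (h N i) ∘L (P N i)))).reverse).prod) (A N) - A N‖
          ≤ _ := step1
        _ = _ := step2
        _ ≤ (D : ℝ) * Real.sqrt (bnd N) := step3
    have hDs : Tendsto (fun N => (D : ℝ) * Real.sqrt (bnd N)) atTop (nhds 0) := by
      have := hsqrt.const_mul (D : ℝ)
      simpa using this
    exact squeeze_zero (fun N => norm_nonneg _) hb hDs
end
end

section
/- Let g ∈ ℂ be nonzero and N = 2m with m ≥ 1 an integer. Let B^(g) be the normalized boundary state on the N-qubit space: B^(g)(s) = g^{−n}/𝒩 if s has a single 1 located at site n and 0 elsewhere, B^(g)(s) = 0 otherwise, where 𝒩 = (Σ_{n=0}^{N−1} |g|^{−2n})^{1/2}. Identify configurations s : Fin N → Fin 2 with pairs (s₁, s₂) of configurations s₁, s₂ : Fin m → Fin 2 by splitting the chain into its first m and last m sites. Set r = |g^{−1}|, p₁ = 1/(1 + r^N) and p₂ = r^N/(1 + r^N). Then there exist unit vectors u, u' in the m-qubit space, each orthogonal to the basis vector e₀ indexed by the all-zeros configuration of m sites, and a complex number β with |β|² =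 p₂, such that B^(g)(s₁, s₂) = √p₁ · u(s₁) · e₀(s₂) + β · e₀(s₁) · u'(s₂) for all configurations s₁, s₂. -/
open scoped BigOperators

noncomputable section

/-- The configuration of `N` qubits with a single excitation (a single `1`) at site `k`. -/
def exc {N : ℕ} (k : Fin N) : Fin N → Fin 2 := fun j => if j = k then 1 else 0

/-- The normalised boundary state on `N` qubits: amplitude `g^{−n}/𝒩` on the configuration
with a single `1` at site `n` (`𝒩 = (∑ₙ |g|^{−2n})^{1/2}`), amplitude `0` otherwise. -/
def bstate (g : ℂ) (N : ℕ) : (Fin N → Fin 2) → ℂ :=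
  fun s => (∑ k : Fin N, if s = exc k then g ^ (-(k : ℕ) : ℤ) else 0) /
    ((Real.sqrt (∑ n : Fin N, ‖g‖ ^ (-(2 * (n : ℕ)) : ℤ)) : ℝ) : ℂ)

/-- Identification of a configuration of `2m` sites with a pair of configurations of `m`
sites (first and second half of the chain). -/
def join (m : ℕ) (s₁ s₂ : Fin m → Fin 2) : Fin (2 * m) → Fin 2 :=
  fun j => if h : (j : ℕ) < m then s₁ ⟨j, h⟩
    else s₂ ⟨(j : ℕ) - m, by have := j.isLt; omega⟩

/-- The `m`-qubit basis vector indexed by the all-zeros configuration. -/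
def e0 (m : ℕ) : (Fin m → Fin 2) → ℂ := Pi.single (fun _ => (0 : Fin 2)) (1 : ℂ)

lemma exc_injective {N : ℕ} : Function.Injective (exc (N := N)) := by
  intro a b h
  have h1 := congrFun h a
  simp only [exc, if_pos rfl] at h1
  by_contra hab
  rw [if_neg hab] at h1
  exact absurd h1 (by decide)

lemma exc_ne_zero {N : ℕ} (k : Fin N) : exc k ≠ fun _ => 0 := by
  intro h
  have := congrFun h k
  simp [exc] at this

lemma twoMulSum {M : Type*} [AddCommMonoid M] (m : ℕ) (f : Fin (2*m) → M) :
    ∑ k, f k = (∑ k : Fin m, f ⟨k, by have := k.isLt; omega⟩)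
      + ∑ k : Fin m, f ⟨m + k, by have := k.isLt; omega⟩ := by
  rw [Fintype.sum_equiv (finCongr (two_mul m)) f
    (fun i => f (finCongr (two_mul m).symm i)) (by simp)]
  rw [Fin.sum_univ_add]
  congr 1

lemma sum_abs_sq_indicator (m : ℕ) (c : Fin m → ℂ) :
    ∑ s : Fin m → Fin 2, ‖∑ k : Fin m, if s = exc k then c k else 0‖ ^ 2
      = ∑ k : Fin m, ‖c k‖ ^ 2 := by
  classical
  have h1 : ∀ k : Fin m, (∑ j : Fin m, if exc k = exc j then c j else 0) = c k := by
    intro k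
    rw [Finset.sum_eq_single k]
    · simp
    · intro j _ hj
      rw [if_neg (fun h => hj (exc_injective h.symm))]
    · simp
  calc ∑ s : Fin m → Fin 2, ‖∑ k : Fin m, if s = exc k then c k else 0‖ ^ 2
      = ∑ s ∈ Finset.univ.image exc,
          ‖∑ k : Fin m, if s = exc k then c k else 0‖ ^ 2 := by
        refine (Finset.sum_subset (Finset.subset_univ _) ?_).symm
        intro s _ hs
        have : ∀ k : Fin m, s ≠ exc k := by
          intro k hk
          exact hs (Finset.mem_image.mpr ⟨k, Finset.mem_univ k, hk.symm⟩)
        simp [this]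
    _ = ∑ k : Fin m, ‖∑ j : Fin m, if exc k = exc j then c j else 0‖ ^ 2 :=
        Finset.sum_image (fun x _ y _ h => exc_injective h)
    _ = ∑ k : Fin m, ‖c k‖ ^ 2 := by
        refine Finset.sum_congr rfl fun k _ => by rw [h1]

lemma join_eq_exc_low (m : ℕ) (s₁ s₂ : Fin m → Fin 2) (k : Fin m) (h : (k:ℕ) < 2*m) :
    (join m s₁ s₂ = exc ⟨k, h⟩) ↔ (s₁ = exc k ∧ s₂ = fun _ => 0) := by
  constructor
  · intro he
    refine ⟨funext fun j => ?_, funext fun j => ?_⟩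
    · have hj : (j:ℕ) < 2*m := by have := j.isLt; omega
      have := congrFun he ⟨j, hj⟩
      simpa [join, exc, j.isLt, Fin.ext_iff] using this
    · have hj : m + (j:ℕ) < 2*m := by have := j.isLt; omega
      have h1 : ¬ (m + (j:ℕ) < m) := by omega
      have h2 : m + (j:ℕ) - m = (j:ℕ) := by omega
      have h3 : ¬ (m + (j:ℕ) = (k:ℕ)) := by have := k.isLt; omega
      have := congrFun he ⟨m + j, hj⟩
      simp only [join, exc, h1, h2, h3, Fin.ext_iff] at this
      simpa using this
  · rintro ⟨h1, h2⟩
    funext j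
    by_cases hj : (j:ℕ) < m
    · subst h1 h2
      simp [join, exc, hj, Fin.ext_iff]
    · subst h1 h2
      have h3 : ¬ ((j:ℕ) = (k:ℕ)) := by have := k.isLt; omega
      simp [join, exc, hj, h3, Fin.ext_iff]

lemma join_eq_exc_high (m : ℕ) (s₁ s₂ : Fin m → Fin 2) (k : Fin m) (h : m + (k:ℕ) < 2*m) :
    (join m s₁ s₂ = exc ⟨m + k, h⟩) ↔ (s₁ = (fun _ => 0) ∧ s₂ = exc k) := by
  constructor
  · intro he
    refine ⟨funext fun j => ?_, funext fun j => ?_⟩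
    · have hj : (j:ℕ) < 2*m := by have := j.isLt; omega
      have h3 : ¬ ((j:ℕ) = m + (k:ℕ)) := by have := j.isLt; omega
      have := congrFun he ⟨j, hj⟩
      simp only [join, exc, j.isLt, h3, Fin.ext_iff] at this
      simpa using this
    · have hj : m + (j:ℕ) < 2*m := by have := j.isLt; omega
      have h1 : ¬ (m + (j:ℕ) < m) := by omega
      have h2 : m + (j:ℕ) - m = (j:ℕ) := by omega
      have h3 : (m + (j:ℕ) = m + (k:ℕ)) ↔ (j:ℕ) = (k:ℕ) := by omega
      have := congrFun he ⟨m + j, hj⟩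
      simpa [join, exc, h1, h2, h3, Fin.ext_iff] using this
  · rintro ⟨h1, h2⟩
    funext j
    by_cases hj : (j:ℕ) < m
    · subst h1 h2
      have h3 : ¬ ((j:ℕ) = m + (k:ℕ)) := by omega
      simp [join, exc, hj, h3, Fin.ext_iff]
    · subst h1 h2
      have h2' : (j:ℕ) - m < m := by have := j.isLt; omega
      have h3 : ((j:ℕ) - m = (k:ℕ)) ↔ ((j:ℕ) = m + (k:ℕ)) := by omega
      simp [join, exc, hj, h3, Fin.ext_iff]

/-- Schmidt decomposition of the boundary scar across the middle bond of a chain of even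
length `N = 2m`: with `r = |g⁻¹|`, `p₁ = 1/(1+r^N)`, `p₂ = r^N/(1+r^N)`, there are unit
vectors `u`, `u'` of the half-chain, orthogonal to the all-zeros basis vector `e₀`, and a
scalar `β` with `|β|² = p₂`, such that
`B^(g)(s₁, s₂) = √p₁ · u(s₁) · e₀(s₂) + β · e₀(s₁) · u'(s₂)`. -/
theorem boundary_state_schmidt (g : ℂ) (hg : g ≠ 0) (m : ℕ) (hm : 1 ≤ m) :
    ∃ (u u' : (Fin m → Fin 2) → ℂ) (β : ℂ),
      (∑ s : Fin m → Fin 2, ‖u s‖ ^ 2) = 1 ∧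
      (∑ s : Fin m → Fin 2, ‖u' s‖ ^ 2) = 1 ∧
      u (fun _ => 0) = 0 ∧ u' (fun _ => 0) = 0 ∧
      ‖β‖ ^ 2 =
        ‖g⁻¹‖ ^ (2 * m) / (1 + ‖g⁻¹‖ ^ (2 * m)) ∧
      ∀ s₁ s₂ : Fin m → Fin 2,
        bstate g (2 * m) (join m s₁ s₂) =
          ((Real.sqrt (1 / (1 + ‖g⁻¹‖ ^ (2 * m))) : ℝ) : ℂ) * u s₁ * e0 m s₂ +
            β * e0 m s₁ * u' s₂ := by
  classical
  have hg' : g⁻¹ ≠ 0 := inv_ne_zero hg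
  set r : ℝ := ‖g⁻¹‖ with hrdef
  have hr0 : 0 < r := norm_pos_iff.mpr hg'
  set T : ℝ := 1 + r ^ (2*m) with hTdef
  have hT0 : 0 < T := by positivity
  set A2 : ℝ := ∑ n : Fin m, r ^ (2*(n:ℕ)) with hA2def
  have hA2pos : 0 < A2 := by
    haveI : Nonempty (Fin m) := ⟨⟨0, hm⟩⟩
    exact Finset.sum_pos (fun i _ => by positivity) Finset.univ_nonempty
  set A : ℝ := Real.sqrt A2 with hAdef
  have hApos : 0 < A := Real.sqrt_pos.mpr hA2pos
  have hAsq : A^2 = A2 := Real.sq_sqrt hA2pos.le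
  set sT : ℝ := Real.sqrt T with hsTdef
  have hsTpos : 0 < sT := Real.sqrt_pos.mpr hT0
  have hsinv : Real.sqrt (1/T) = 1/sT := by
    rw [one_div, one_div, Real.sqrt_inv]
  set S1 : (Fin m → Fin 2) → ℂ :=
    fun s => ∑ k : Fin m, if s = exc k then g⁻¹ ^ (k:ℕ) else 0 with hS1def
  set S2 : (Fin m → Fin 2) → ℂ :=
    fun s => ∑ k : Fin m, if s = exc k then g⁻¹ ^ (m+(k:ℕ)) else 0 with hS2def
  refine ⟨fun s => S1 s / (A:ℂ), fun s => S2 s / (((A * r^m : ℝ)):ℂ),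
    (((r^m * Real.sqrt (1/T) : ℝ)):ℂ), ?_, ?_, ?_, ?_, ?_, ?_⟩
  · have hdiv : ∀ s, ‖S1 s / (A:ℂ)‖ ^ 2 = ‖S1 s‖ ^ 2 / A2 := by
      intro s
      rw [norm_div, Complex.norm_real, Real.norm_of_nonneg hApos.le, div_pow, hAsq]
    rw [Finset.sum_congr rfl (fun s _ => hdiv s), ← Finset.sum_div, hS1def]
    rw [sum_abs_sq_indicator m (fun k => g⁻¹ ^ (k:ℕ))]
    have : ∀ k : Fin m, ‖g⁻¹ ^ (k:ℕ)‖ ^ 2 = r ^ (2*(k:ℕ)) := by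
      intro k
      rw [norm_pow, ← pow_mul, Nat.mul_comm]
    rw [Finset.sum_congr rfl (fun k _ => this k), ← hA2def, div_self hA2pos.ne']
  · have hBpos : (0:ℝ) < A * r^m := by positivity
    have hdiv : ∀ s, ‖S2 s / (((A * r^m : ℝ)):ℂ)‖ ^ 2
        = ‖S2 s‖ ^ 2 / (A2 * r^(2*m)) := by
      intro s
      rw [norm_div, Complex.norm_real, Real.norm_of_nonneg hBpos.le, div_pow, mul_pow, hAsq,
        ← pow_mul, Nat.mul_comm m 2]
    rw [Finset.sum_congr rfl (fun s _ => hdiv s), ← Finset.sum_div, hS2def]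
    rw [sum_abs_sq_indicator m (fun k => g⁻¹ ^ (m+(k:ℕ)))]
    have : ∀ k : Fin m, ‖g⁻¹ ^ (m+(k:ℕ))‖ ^ 2 = r^(2*m) * r ^ (2*(k:ℕ)) := by
      intro k
      rw [norm_pow, ← pow_mul, ← pow_add]
      rw [hrdef]
      ring_nf
    rw [Finset.sum_congr rfl (fun k _ => this k), ← Finset.mul_sum, ← hA2def,
      mul_comm (r^(2*m)) A2]
    exact div_self (by positivity)
  · have : ∀ k : Fin m, (fun _ : Fin m => (0 : Fin 2)) ≠ exc k :=
      fun k h => exc_ne_zero k h.symm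
    simp [hS1def, this]
  · have : ∀ k : Fin m, (fun _ : Fin m => (0 : Fin 2)) ≠ exc k :=
      fun k h => exc_ne_zero k h.symm
    simp [hS2def, this]
  · rw [Complex.norm_real, Real.norm_of_nonneg (by positivity), mul_pow,
      Real.sq_sqrt (by positivity), ← pow_mul, Nat.mul_comm m 2]
    ring
  · intro s₁ s₂
    have hnorm : (∑ n : Fin (2*m), ‖g‖ ^ (-(2*(n:ℕ)) : ℤ)) = A2 * T := by
      have h1 : ∀ n : Fin (2*m), ‖g‖ ^ (-(2*(n:ℕ)) : ℤ) = r ^ (2*(n:ℕ)) := by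
        intro n
        rw [hrdef, norm_inv, inv_pow, zpow_neg]
        norm_cast
      rw [Finset.sum_congr rfl (fun n _ => h1 n),
        twoMulSum m (fun k : Fin (2*m) => r ^ (2*(k:ℕ)))]
      have h2 : ∑ k : Fin m, r ^ (2*(m+(k:ℕ))) = r^(2*m) * A2 := by
        rw [hA2def, Finset.mul_sum]
        refine Finset.sum_congr rfl fun k _ => ?_
        rw [← pow_add]
        ring_nf
      simp only []
      rw [h2, ← hA2def, hTdef]
      ring
    have hnum : (∑ k : Fin (2*m), if join m s₁ s₂ = exc k then g ^ (-(k:ℕ) : ℤ) else 0)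
        = e0 m s₂ * S1 s₁ + e0 m s₁ * S2 s₂ := by
      have hg2 : ∀ k : Fin (2*m), (if join m s₁ s₂ = exc k then g ^ (-(k:ℕ) : ℤ) else 0)
          = (if join m s₁ s₂ = exc k then g⁻¹ ^ (k:ℕ) else 0) := by
        intro k
        rw [inv_pow, zpow_neg]
        norm_cast
      rw [Finset.sum_congr rfl (fun k _ => hg2 k),
        twoMulSum m (fun k : Fin (2*m) => if join m s₁ s₂ = exc k then g⁻¹ ^ (k:ℕ) else 0)]
      congr 1
      · by_cases h2 : s₂ = fun _ => 0
        · subst h2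
          have he : e0 m (fun _ : Fin m => (0 : Fin 2)) = 1 := by
            rw [e0, Pi.single_eq_same]
          rw [he, one_mul, hS1def]
          refine Finset.sum_congr rfl fun k _ => ?_
          simp [join_eq_exc_low]
        · have he : e0 m s₂ = 0 := Pi.single_eq_of_ne h2 1
          rw [he, zero_mul]
          refine Finset.sum_eq_zero fun k _ => ?_
          rw [if_neg]
          intro hc
          exact h2 ((join_eq_exc_low m s₁ s₂ k (by have := k.isLt; omega)).mp hc).2
      · by_cases h1 : s₁ = fun _ => 0
        · subst h1
          have he : e0 m (fun _ : Fin m => (0 : Fin 2)) = 1 := by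
            rw [e0, Pi.single_eq_same]
          rw [he, one_mul, hS2def]
          refine Finset.sum_congr rfl fun k _ => ?_
          simp [join_eq_exc_high]
        · have he : e0 m s₁ = 0 := Pi.single_eq_of_ne h1 1
          rw [he, zero_mul]
          refine Finset.sum_eq_zero fun k _ => ?_
          rw [if_neg]
          intro hc
          exact h1 ((join_eq_exc_high m s₁ s₂ k (by have := k.isLt; omega)).mp hc).1
    have hDenom : Real.sqrt (∑ n : Fin (2*m), ‖g‖ ^ (-(2*(n:ℕ)) : ℤ)) = A * sT := by
      rw [hnorm, Real.sqrt_mul hA2pos.le, ← hAdef, ← hsTdef]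
    rw [bstate, hnum, hDenom]
    have key1 : ((Real.sqrt (1/T) : ℝ) : ℂ) / (A:ℂ) = 1 / (((A * sT : ℝ)):ℂ) := by
      have hre : Real.sqrt (1/T) / A = 1/(A*sT) := by
        rw [hsinv]
        field_simp
      calc ((Real.sqrt (1/T) : ℝ) : ℂ) / (A:ℂ)
          = ((Real.sqrt (1/T) / A : ℝ) : ℂ) := by push_cast; ring
        _ = ((1/(A*sT) : ℝ) : ℂ) := by rw [hre]
        _ = 1 / (((A * sT : ℝ)):ℂ) := by push_cast; ring
    have key2 : (((r^m * Real.sqrt (1/T) : ℝ)) : ℂ) / (((A * r^m : ℝ)):ℂ)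
        = 1 / (((A * sT : ℝ)):ℂ) := by
      have hre : (r^m * Real.sqrt (1/T)) / (A * r^m) = 1/(A*sT) := by
        rw [hsinv]
        field_simp
      calc (((r^m * Real.sqrt (1/T) : ℝ)) : ℂ) / (((A * r^m : ℝ)):ℂ)
          = (((r^m * Real.sqrt (1/T)) / (A * r^m) : ℝ) : ℂ) := by push_cast; ring
        _ = ((1/(A*sT) : ℝ) : ℂ) := by rw [hre]
        _ = 1 / (((A * sT : ℝ)):ℂ) := by push_cast; ring
    have expand : (e0 m s₂ * S1 s₁ + e0 m s₁ * S2 s₂) / (((A * sT : ℝ)):ℂ)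
        = (1 / (((A * sT : ℝ)):ℂ)) * (e0 m s₂ * S1 s₁)
          + (1 / (((A * sT : ℝ)):ℂ)) * (e0 m s₁ * S2 s₂) := by
      ring
    beta_reduce
    rw [expand,
      show ((Real.sqrt (1/T) : ℝ) : ℂ) * (S1 s₁ / (A:ℂ)) * e0 m s₂
          = (((Real.sqrt (1/T) : ℝ) : ℂ) / (A:ℂ)) * (e0 m s₂ * S1 s₁) from by ring,
      show (((r^m * Real.sqrt (1/T) : ℝ)) : ℂ) * e0 m s₁ * (S2 s₂ / (((A * r^m : ℝ)):ℂ))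
          = ((((r^m * Real.sqrt (1/T) : ℝ)) : ℂ) / (((A * r^m : ℝ)):ℂ)) * (e0 m s₁ * S2 s₂)
        from by ring,
      key1, key2]
end
end
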